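/- arXiv:2212.05522 — 3 statements merged into one kernel-verified Lean document; each statement's English description precedes it below -/
import Mathlib

section
/- Let 𝓕 be an ω-closed family of nonempty inductive subsets of ω and let S = B_ω^𝓕 ∪ {0} be B_ω^𝓕 with an adjoined zero, equipped with a Hausdorff locally compact shift-continuous topology in which 0 is not an isolated point. Then for every neighbourhood U of 0 in S, the set S \ U is finite. -/
/-- For `n : ℕ` and `F ⊆ ω`, `wShift n F` is the set `(−n)+F = {x ∈ ω : x + n ∈ F}`. -/
def wShift (n : ℕ) (F : Set ℕ) : Set ℕ := {x | x + n ∈ F}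

/-- A family `𝓕` of subsets of `ω` is ω-closed if `F₁ ∩ ((−n)+F₂) ∈ 𝓕`
for all `n ∈ ω` and `F₁, F₂ ∈ 𝓕`. -/
def OmegaClosed (𝓕 : Set (Set ℕ)) : Prop :=
  ∀ n : ℕ, ∀ F₁ ∈ 𝓕, ∀ F₂ ∈ 𝓕, F₁ ∩ wShift n F₂ ∈ 𝓕

/-- A subset `F ⊆ ω` is inductive if `n ∈ F` implies `n+1 ∈ F`. -/
def InductiveSet (F : Set ℕ) : Prop := ∀ n : ℕ, n ∈ F → n + 1 ∈ F

/-- The underlying set `ω × ω × 𝓕` of the semigroup `B_ω^𝓕`. -/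
abbrev BF (𝓕 : Set (Set ℕ)) : Type := ℕ × ℕ × {F : Set ℕ // F ∈ 𝓕}

/-- The multiplication of the semigroup `B_ω^𝓕`:
`(i₁,j₁,F₁)·(i₂,j₂,F₂) = (i₁−j₁+i₂, j₂, ((j₁−i₂)+F₁) ∩ F₂)` if `j₁ ≤ i₂`, and
`(i₁, j₁−i₂+j₂, F₁ ∩ ((i₂−j₁)+F₂))` if `j₁ ≥ i₂`. -/
def BFmul {𝓕 : Set (Set ℕ)} (h : OmegaClosed 𝓕) (a b : BF 𝓕) : BF 𝓕 :=
  if a.2.1 ≤ b.1 then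
    (a.1 + (b.1 - a.2.1), b.2.1,
      ⟨wShift (b.1 - a.2.1) a.2.2.1 ∩ b.2.2.1, by
        rw [Set.inter_comm]; exact h _ _ b.2.2.2 _ a.2.2.2⟩)
  else
    (a.1, b.2.1 + (a.2.1 - b.1),
      ⟨a.2.2.1 ∩ wShift (a.2.1 - b.1) b.2.2.1, h _ _ a.2.2.2 _ b.2.2.2⟩)

/-- `B_ω^𝓕` with an adjoined zero; `none` plays the role of the zero `0`. -/
abbrev BF0 (𝓕 : Set (Set ℕ)) : Type := Option (BF 𝓕)

/-- The multiplication of the semigroup `B_ω^𝓕` with an adjoined zero. -/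
def BF0mul {𝓕 : Set (Set ℕ)} (h : OmegaClosed 𝓕) : BF0 𝓕 → BF0 𝓕 → BF0 𝓕
  | some a, some b => some (BFmul h a b)
  | _, _ => none

namespace S9aux

lemma mem_wShift {n : ℕ} {F : Set ℕ} {x : ℕ} : x ∈ wShift n F ↔ x + n ∈ F := Iff.rfl

lemma wShift_zero (F : Set ℕ) : wShift 0 F = F := by ext x; simp [wShift]

lemma wShift_Ici (d m : ℕ) : wShift d (Set.Ici m) = Set.Ici (m - d) := by
  ext x; simp only [wShift, Set.mem_Ici, Set.mem_setOf_eq]; omega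

variable {𝓕 : Set (Set ℕ)}

lemma seg_mem_iff (hne : ∀ F ∈ 𝓕, F.Nonempty) (hind : ∀ F ∈ 𝓕, InductiveSet F)
    {F : Set ℕ} (hF : F ∈ 𝓕) {x : ℕ} : x ∈ F ↔ sInf F ≤ x := by
  constructor
  · exact fun h => Nat.sInf_le h
  · intro h
    have key : ∀ d, sInf F + d ∈ F := by
      intro d; induction d with
      | zero => simpa using Nat.sInf_mem (hne F hF)
      | succ n ih => exact hind F hF _ ih
    have := key (x - sInf F)
    rwa [Nat.add_sub_cancel' h] at this

lemma seg_eq (hne : ∀ F ∈ 𝓕, F.Nonempty) (hind : ∀ F ∈ 𝓕, InductiveSet F)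
    {F : Set ℕ} (hF : F ∈ 𝓕) : F = Set.Ici (sInf F) := by
  ext x; rw [seg_mem_iff hne hind hF]; simp

lemma min_inj (hne : ∀ F ∈ 𝓕, F.Nonempty) (hind : ∀ F ∈ 𝓕, InductiveSet F)
    {F G : Set ℕ} (hF : F ∈ 𝓕) (hG : G ∈ 𝓕) (h : sInf F = sInf G) : F = G := by
  rw [seg_eq hne hind hF, seg_eq hne hind hG, h]

lemma exists_top (hne : ∀ F ∈ 𝓕, F.Nonempty) (hind : ∀ F ∈ 𝓕, InductiveSet F)
    (h𝓕 : 𝓕.Nonempty) :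
    ∃ F₀ ∈ 𝓕, (∀ G ∈ 𝓕, sInf F₀ ≤ sInf G) ∧ ∀ G ∈ 𝓕, ∀ d : ℕ, G ⊆ wShift d F₀ := by
  obtain ⟨F₀, hF₀, hinf⟩ := Nat.sInf_mem (h𝓕.image sInf)
  refine ⟨F₀, hF₀, fun G hG => ?_, fun G hG d x hx => ?_⟩
  · rw [hinf]; exact Nat.sInf_le ⟨G, hG, rfl⟩
  · rw [mem_wShift, seg_mem_iff hne hind hF₀]
    have h1 : sInf F₀ ≤ sInf G := by rw [hinf]; exact Nat.sInf_le ⟨G, hG, rfl⟩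
    have h2 : sInf G ≤ x := Nat.sInf_le hx
    omega

lemma grid (P : Set (ℕ × ℕ))
    (h1 : {p | p ∈ P ∧ (p.1 + 1, p.2) ∉ P}.Finite)
    (h2 : {p | p ∈ P ∧ (p.1, p.2 + 1) ∉ P}.Finite)
    (h3 : {p | p ∉ P ∧ (p.1 + 1, p.2) ∈ P}.Finite)
    (h4 : {p | p ∉ P ∧ (p.1, p.2 + 1) ∈ P}.Finite) :
    P.Finite ∨ Pᶜ.Finite := by
  by_contra hcon
  push_neg at hcon
  obtain ⟨hP, hPc⟩ := hcon
  have hbadfin : ({p | p ∈ P ∧ (p.1 + 1, p.2) ∉ P} ∪ {p | p ∈ P ∧ (p.1, p.2 + 1) ∉ P} ∪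
      ({p | p ∉ P ∧ (p.1 + 1, p.2) ∈ P} ∪ {p | p ∉ P ∧ (p.1, p.2 + 1) ∈ P})).Finite :=
    (h1.union h2).union (h3.union h4)
  set bad := {p | p ∈ P ∧ (p.1 + 1, p.2) ∉ P} ∪ {p | p ∈ P ∧ (p.1, p.2 + 1) ∉ P} ∪
      ({p | p ∉ P ∧ (p.1 + 1, p.2) ∈ P} ∪ {p | p ∉ P ∧ (p.1, p.2 + 1) ∈ P}) with hbaddef
  obtain ⟨N, hN⟩ : ∃ N, ∀ p ∈ bad, p.1 < N ∧ p.2 < N := by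
    obtain ⟨M1, hM1⟩ := (hbadfin.image Prod.fst).bddAbove
    obtain ⟨M2, hM2⟩ := (hbadfin.image Prod.snd).bddAbove
    refine ⟨M1 + M2 + 1, fun p hp => ?_⟩
    have e1 : p.1 ≤ M1 := hM1 (Set.mem_image_of_mem _ hp)
    have e2 : p.2 ≤ M2 := hM2 (Set.mem_image_of_mem _ hp)
    omega
  have cone : ∀ S : Set (ℕ × ℕ),
      (∀ p, p ∈ S → (N ≤ p.1 ∨ N ≤ p.2) → ((p.1 + 1, p.2) ∈ S ∧ (p.1, p.2 + 1) ∈ S)) →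
      ∀ p, p ∈ S → (N ≤ p.1 ∨ N ≤ p.2) → ∀ k l, (p.1 + k, p.2 + l) ∈ S := by
    intro S hS p hp hcoord k l
    have hup : ∀ l', (p.1, p.2 + l') ∈ S := by
      intro l'; induction l' with
      | zero => simpa using hp
      | succ n ih =>
        have h' := (hS (p.1, p.2 + n) ih (by rcases hcoord with h | h
                                             · exact Or.inl h
                                             · exact Or.inr (by simp; omega))).2
        simpa [Nat.add_assoc] using h'
    induction k with
    | zero => simpa using hup l
    | succ n ih =>
      have h' := (hS (p.1 + n, p.2 + l) ih (by rcases hcoord with h | h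
                                               · exact Or.inl (by simp; omega)
                                               · exact Or.inr (by simp; omega))).1
      simpa [Nat.add_assoc] using h'
  have hPclosed : ∀ p, p ∈ P → (N ≤ p.1 ∨ N ≤ p.2) → ((p.1 + 1, p.2) ∈ P ∧ (p.1, p.2 + 1) ∈ P) := by
    intro p hp hc
    constructor
    · by_contra hmem
      have : p ∈ bad := by rw [hbaddef]; left; left; exact ⟨hp, hmem⟩
      have := hN p this; omega
    · by_contra hmem
      have : p ∈ bad := by rw [hbaddef]; left; right; exact ⟨hp, hmem⟩
      have := hN p this; omega
  have hPcclosed : ∀ p, p ∈ Pᶜ → (N ≤ p.1 ∨ N ≤ p.2) → ((p.1 + 1, p.2) ∈ Pᶜ ∧ (p.1, p.2 + 1) ∈ Pᶜ) := by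
    intro p hp hc
    constructor
    · by_contra hmem
      have : p ∈ bad := by rw [hbaddef]; right; left; exact ⟨hp, by simpa using hmem⟩
      have := hN p this; omega
    · by_contra hmem
      have : p ∈ bad := by rw [hbaddef]; right; right; exact ⟨hp, by simpa using hmem⟩
      have := hN p this; omega
  have hexP : ∃ p, p ∈ P ∧ (N ≤ p.1 ∨ N ≤ p.2) := by
    by_contra h; push_neg at h
    refine hP (Set.Finite.subset ((Set.finite_Iio N).prod (Set.finite_Iio N)) ?_)
    intro p hp
    have := h p hp
    exact ⟨by simp; omega, by simp; omega⟩
  have hexQ : ∃ p, p ∈ Pᶜ ∧ (N ≤ p.1 ∨ N ≤ p.2) := by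
    by_contra h; push_neg at h
    refine hPc (Set.Finite.subset ((Set.finite_Iio N).prod (Set.finite_Iio N)) ?_)
    intro p hp
    have := h p hp
    exact ⟨by simp; omega, by simp; omega⟩
  obtain ⟨p, hp, hpc⟩ := hexP
  obtain ⟨q, hq, hqc⟩ := hexQ
  have hmeetP : (max p.1 q.1, max p.2 q.2) ∈ P := by
    have := cone P hPclosed p hp hpc (max p.1 q.1 - p.1) (max p.2 q.2 - p.2)
    have e1 : p.1 + (max p.1 q.1 - p.1) = max p.1 q.1 := by omega
    have e2 : p.2 + (max p.2 q.2 - p.2) = max p.2 q.2 := by omega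
    rwa [e1, e2] at this
  have hmeetQ : (max p.1 q.1, max p.2 q.2) ∈ Pᶜ := by
    have := cone Pᶜ hPcclosed q hq hqc (max p.1 q.1 - q.1) (max p.2 q.2 - q.2)
    have e1 : q.1 + (max p.1 q.1 - q.1) = max p.1 q.1 := by omega
    have e2 : q.2 + (max p.2 q.2 - q.2) = max p.2 q.2 := by omega
    rwa [e1, e2] at this
  exact hmeetQ hmeetP


section mul
variable (hcl : OmegaClosed 𝓕) (F₀ : {F : Set ℕ // F ∈ 𝓕})
  (htop : ∀ G ∈ 𝓕, ∀ d : ℕ, G ⊆ wShift d F₀.1)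
include htop

lemma mE1 (k i j : ℕ) (G : {F : Set ℕ // F ∈ 𝓕}) (hk : k ≤ i) :
    BFmul hcl (0, k, F₀) (i, j, G) = (i - k, j, G) := by
  unfold BFmul
  rw [if_pos (show ((0:ℕ), k, F₀).2.1 ≤ ((i, j, G) : BF 𝓕).1 from hk)]
  refine Prod.ext_iff.mpr ⟨by simp, Prod.ext_iff.mpr ⟨rfl, Subtype.ext ?_⟩⟩
  exact Set.inter_eq_right.mpr (htop _ G.2 _)

omit htop in
lemma mE2 (k i j : ℕ) (G : {F : Set ℕ // F ∈ 𝓕}) (hk : i < k) :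
    BFmul hcl (0, k, F₀) (i, j, G) =
      (0, j + (k - i), ⟨F₀.1 ∩ wShift (k - i) G.1, hcl _ _ F₀.2 _ G.2⟩) := by
  unfold BFmul
  rw [if_neg (show ¬ ((0:ℕ), k, F₀).2.1 ≤ ((i, j, G) : BF 𝓕).1 from by simpa using hk)]

lemma mc2 (k i j : ℕ) (G : {F : Set ℕ // F ∈ 𝓕}) :
    BFmul hcl (k, 0, F₀) (i, j, G) = (k + i, j, G) := by
  unfold BFmul
  rw [if_pos (show (k, (0:ℕ), F₀).2.1 ≤ ((i, j, G) : BF 𝓕).1 from Nat.zero_le _)]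
  refine Prod.ext_iff.mpr ⟨by simp, Prod.ext_iff.mpr ⟨rfl, Subtype.ext ?_⟩⟩
  exact Set.inter_eq_right.mpr (htop _ G.2 _)

lemma mF1 (k i j : ℕ) (G : {F : Set ℕ // F ∈ 𝓕}) (hk : k ≤ j) :
    BFmul hcl (i, j, G) (k, 0, F₀) = (i, j - k, G) := by
  unfold BFmul
  by_cases h : j ≤ k
  · have hjk : j = k := le_antisymm h hk
    subst hjk
    rw [if_pos (show ((i, j, G) : BF 𝓕).2.1 ≤ (j, (0:ℕ), F₀).1 from le_refl _)]
    refine Prod.ext_iff.mpr ⟨by simp, Prod.ext_iff.mpr ⟨by simp, Subtype.ext ?_⟩⟩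
    show wShift (j - j) G.1 ∩ F₀.1 = G.1
    rw [Nat.sub_self, wShift_zero]
    refine Set.inter_eq_left.mpr ?_
    have := htop _ G.2 0
    rwa [wShift_zero] at this
  · rw [if_neg (show ¬ ((i, j, G) : BF 𝓕).2.1 ≤ (k, (0:ℕ), F₀).1 from h)]
    refine Prod.ext_iff.mpr ⟨rfl, Prod.ext_iff.mpr ⟨by simp, Subtype.ext ?_⟩⟩
    exact Set.inter_eq_left.mpr (htop _ G.2 _)

omit htop in
lemma mF2 (k i j : ℕ) (G : {F : Set ℕ // F ∈ 𝓕}) (hk : j < k) :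
    BFmul hcl (i, j, G) (k, 0, F₀) =
      (i + (k - j), 0, ⟨wShift (k - j) G.1 ∩ F₀.1, by
        rw [Set.inter_comm]; exact hcl _ _ F₀.2 _ G.2⟩) := by
  unfold BFmul
  rw [if_pos (show ((i, j, G) : BF 𝓕).2.1 ≤ (k, (0:ℕ), F₀).1 from le_of_lt hk)]

lemma mc5 (l i j : ℕ) (G : {F : Set ℕ // F ∈ 𝓕}) :
    BFmul hcl (i, j, G) (0, l, F₀) = (i, l + j, G) := by
  unfold BFmul
  by_cases h : j ≤ 0
  · have hj : j = 0 := Nat.le_zero.mp h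
    subst hj
    rw [if_pos (show ((i, 0, G) : BF 𝓕).2.1 ≤ ((0:ℕ), l, F₀).1 from le_refl _)]
    refine Prod.ext_iff.mpr ⟨by simp, Prod.ext_iff.mpr ⟨by simp, Subtype.ext ?_⟩⟩
    show wShift (0 - 0) G.1 ∩ F₀.1 = G.1
    rw [Nat.sub_self, wShift_zero]
    refine Set.inter_eq_left.mpr ?_
    have := htop _ G.2 0
    rwa [wShift_zero] at this
  · rw [if_neg (show ¬ ((i, j, G) : BF 𝓕).2.1 ≤ ((0:ℕ), l, F₀).1 from h)]
    refine Prod.ext_iff.mpr ⟨rfl, Prod.ext_iff.mpr ⟨by simp, Subtype.ext ?_⟩⟩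
    exact Set.inter_eq_left.mpr (htop _ G.2 _)

omit htop in
lemma mlam (T : {F : Set ℕ // F ∈ 𝓕}) (i j : ℕ) (G : {F : Set ℕ // F ∈ 𝓕}) :
    BFmul hcl (0, 0, T) (i, j, G) =
      (i, j, ⟨wShift i T.1 ∩ G.1, by
        rw [Set.inter_comm]; exact hcl _ _ G.2 _ T.2⟩) := by
  unfold BFmul
  rw [if_pos (show ((0:ℕ), 0, T).2.1 ≤ ((i, j, G) : BF 𝓕).1 from Nat.zero_le _)]
  refine Prod.ext_iff.mpr ⟨by simp, Prod.ext_iff.mpr ⟨rfl, Subtype.ext ?_⟩⟩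
  show wShift (i - 0) T.1 ∩ G.1 = wShift i T.1 ∩ G.1
  rw [Nat.sub_zero]

omit htop in
lemma mrho (T : {F : Set ℕ // F ∈ 𝓕}) (i j : ℕ) (G : {F : Set ℕ // F ∈ 𝓕}) :
    BFmul hcl (i, j, G) (0, 0, T) =
      (i, j, ⟨G.1 ∩ wShift j T.1, hcl _ _ G.2 _ T.2⟩) := by
  unfold BFmul
  by_cases h : j ≤ 0
  · have hj : j = 0 := Nat.le_zero.mp h
    subst hj
    rw [if_pos (show ((i, 0, G) : BF 𝓕).2.1 ≤ ((0:ℕ), 0, T).1 from le_refl _)]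
    refine Prod.ext_iff.mpr ⟨by simp, Prod.ext_iff.mpr ⟨rfl, Subtype.ext ?_⟩⟩
    show wShift (0 - 0) G.1 ∩ T.1 = G.1 ∩ wShift 0 T.1
    rw [Nat.sub_self, wShift_zero, wShift_zero]
  · rw [if_neg (show ¬ ((i, j, G) : BF 𝓕).2.1 ≤ ((0:ℕ), 0, T).1 from h)]
    refine Prod.ext_iff.mpr ⟨rfl, Prod.ext_iff.mpr ⟨by simp, Subtype.ext ?_⟩⟩
    rfl

end mul

end S9aux

/-- Lemma 3.5: if `S = B_ω^𝓕 ∪ {0}` carries a Hausdorff locally compact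
shift-continuous topology with nonisolated zero, then for every neighbourhood `U`
of the zero the set `S \ U` is finite. -/
theorem statement9 (𝓕 : Set (Set ℕ)) (hcl : OmegaClosed 𝓕)
    (hne : ∀ F ∈ 𝓕, F.Nonempty) (hind : ∀ F ∈ 𝓕, InductiveSet F)
    (τ : TopologicalSpace (BF0 𝓕)) (hT2 : @T2Space _ τ)
    (hlc : @LocallyCompactSpace _ τ)
    (hsc : ∀ a : BF0 𝓕, @Continuous _ _ τ τ (fun x => BF0mul hcl a x) ∧
        @Continuous _ _ τ τ (fun x => BF0mul hcl x a))
    (hni : ¬ @IsOpen _ τ {(none : BF0 𝓕)})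
    (U : Set (BF0 𝓕)) (hU : U ∈ @nhds _ τ none) :
    Uᶜ.Finite := by
  classical
  letI := τ
  have hnoneU : (none : BF0 𝓕) ∈ U := mem_of_mem_nhds hU
  by_cases h𝓕 : 𝓕.Nonempty
  swap
  · have : Uᶜ = ∅ := by
      ext x
      simp only [Set.mem_compl_iff, Set.mem_empty_iff_false, iff_false, not_not]
      match x with
      | none => exact hnoneU
      | some z => exact absurd ⟨z.2.2.1, z.2.2.2⟩ h𝓕
    rw [this]; exact Set.finite_empty
  obtain ⟨F₀s, hF₀mem, hminF₀, htop'⟩ := S9aux.exists_top hne hind h𝓕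
  set F₀ : {F : Set ℕ // F ∈ 𝓕} := ⟨F₀s, hF₀mem⟩ with hF₀def
  have htop : ∀ G ∈ 𝓕, ∀ d : ℕ, G ⊆ wShift d F₀.1 := htop'
  -- Step 1 : every nonzero point is isolated
  have isol : ∀ z : BF 𝓕, IsOpen {(some z : BF0 𝓕)} := by
    rintro ⟨i, j, G⟩
    -- the set EE captures points with first coordinate ≥ i+1 (plus none)
    have cgE : Continuous (fun x =>
        BF0mul hcl (some (i+1, 0, F₀)) (BF0mul hcl (some (0, i+1, F₀)) x)) :=
      (hsc (some (i+1, 0, F₀))).1.comp (hsc (some (0, i+1, F₀))).1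
    have hEcl : IsClosed {x : BF0 𝓕 |
        BF0mul hcl (some (i+1, 0, F₀)) (BF0mul hcl (some (0, i+1, F₀)) x) = x} :=
      isClosed_eq cgE continuous_id
    have hEnone : (none : BF0 𝓕) ∈ {x : BF0 𝓕 |
        BF0mul hcl (some (i+1, 0, F₀)) (BF0mul hcl (some (0, i+1, F₀)) x) = x} := rfl
    have hEpos : ∀ w : BF 𝓕, i + 1 ≤ w.1 → some w ∈ {x : BF0 𝓕 |
        BF0mul hcl (some (i+1, 0, F₀)) (BF0mul hcl (some (0, i+1, F₀)) x) = x} := by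
      rintro ⟨wi, wj, WG⟩ hw
      show some (BFmul hcl (i+1, 0, F₀) (BFmul hcl (0, i+1, F₀) (wi, wj, WG))) = _
      rw [S9aux.mE1 hcl F₀ htop _ _ _ _ hw, S9aux.mc2 hcl F₀ htop]
      have he : (i+1) + (wi - (i+1)) = wi := by omega
      rw [he]
    have hEneg : ∀ w : BF 𝓕, w.1 < i + 1 → some w ∉ {x : BF0 𝓕 |
        BF0mul hcl (some (i+1, 0, F₀)) (BF0mul hcl (some (0, i+1, F₀)) x) = x} := by
      rintro ⟨wi, wj, WG⟩ hw hmem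
      have hmem' : some (BFmul hcl (i+1, 0, F₀) (BFmul hcl (0, i+1, F₀) (wi, wj, WG)))
          = some (wi, wj, WG) := hmem
      rw [S9aux.mE2 hcl F₀ _ _ _ _ hw, S9aux.mc2 hcl F₀ htop] at hmem'
      have h' := Option.some.inj hmem'
      have h1 : i + 1 + 0 = wi := congrArg Prod.fst h'
      omega
    -- FF captures points with second coordinate ≥ j+1 (plus none)
    have cgF : Continuous (fun x =>
        BF0mul hcl (BF0mul hcl x (some (j+1, 0, F₀))) (some (0, j+1, F₀))) :=
      (hsc (some (0, j+1, F₀))).2.comp (hsc (some (j+1, 0, F₀))).2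
    have hFcl : IsClosed {x : BF0 𝓕 |
        BF0mul hcl (BF0mul hcl x (some (j+1, 0, F₀))) (some (0, j+1, F₀)) = x} :=
      isClosed_eq cgF continuous_id
    have hFnone : (none : BF0 𝓕) ∈ {x : BF0 𝓕 |
        BF0mul hcl (BF0mul hcl x (some (j+1, 0, F₀))) (some (0, j+1, F₀)) = x} := rfl
    have hFpos : ∀ w : BF 𝓕, j + 1 ≤ w.2.1 → some w ∈ {x : BF0 𝓕 |
        BF0mul hcl (BF0mul hcl x (some (j+1, 0, F₀))) (some (0, j+1, F₀)) = x} := by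
      rintro ⟨wi, wj, WG⟩ hw
      have hw' : j + 1 ≤ wj := hw
      show some (BFmul hcl (BFmul hcl (wi, wj, WG) (j+1, 0, F₀)) (0, j+1, F₀)) = _
      rw [S9aux.mF1 hcl F₀ htop _ _ _ _ hw, S9aux.mc5 hcl F₀ htop]
      have he : (j+1) + (wj - (j+1)) = wj := by omega

      rw [he]
    have hFneg : ∀ w : BF 𝓕, w.2.1 < j + 1 → some w ∉ {x : BF0 𝓕 |
        BF0mul hcl (BF0mul hcl x (some (j+1, 0, F₀))) (some (0, j+1, F₀)) = x} := by
      rintro ⟨wi, wj, WG⟩ hw hmem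
      have hw' : wj < j + 1 := hw
      have hmem' : some (BFmul hcl (BFmul hcl (wi, wj, WG) (j+1, 0, F₀)) (0, j+1, F₀))
          = some (wi, wj, WG) := hmem
      rw [S9aux.mF2 hcl F₀ _ _ _ _ hw, S9aux.mc5 hcl F₀ htop] at hmem'
      have h' := Option.some.inj hmem'
      have h2 : j + 1 + 0 = wj := congrArg (fun p : BF 𝓕 => p.2.1) h'
      omega
    -- the CC set (or the finiteness of the family)
    by_cases hTex : ∃ T ∈ 𝓕, sInf G.1 + j + 1 ≤ sInf T
    · obtain ⟨Ts, hTs, hTbig⟩ := hTex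
      have cgC : Continuous (fun x => BF0mul hcl x (some (0, 0, (⟨Ts, hTs⟩ : {F : Set ℕ // F ∈ 𝓕})))) :=
        (hsc (some (0, 0, ⟨Ts, hTs⟩))).2
      have hCcl : IsClosed {x : BF0 𝓕 | BF0mul hcl x (some (0, 0, ⟨Ts, hTs⟩)) = x} :=
        isClosed_eq cgC continuous_id
      have hCnone : (none : BF0 𝓕) ∈ {x : BF0 𝓕 | BF0mul hcl x (some (0, 0, ⟨Ts, hTs⟩)) = x} := rfl
      have hCpos : ∀ w : BF 𝓕, w.2.2.1 ⊆ wShift w.2.1 Ts →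
          some w ∈ {x : BF0 𝓕 | BF0mul hcl x (some (0, 0, ⟨Ts, hTs⟩)) = x} := by
        rintro ⟨wi, wj, WG⟩ hsub
        show some (BFmul hcl (wi, wj, WG) (0, 0, ⟨Ts, hTs⟩)) = _
        rw [S9aux.mrho hcl ⟨Ts, hTs⟩ wi wj WG]
        exact congrArg some (Prod.ext_iff.mpr ⟨rfl, Prod.ext_iff.mpr
          ⟨rfl, Subtype.ext (Set.inter_eq_left.mpr hsub)⟩⟩)
      have hCneg : ∀ w : BF 𝓕, ¬ w.2.2.1 ⊆ wShift w.2.1 Ts →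
          some w ∉ {x : BF0 𝓕 | BF0mul hcl x (some (0, 0, ⟨Ts, hTs⟩)) = x} := by
        rintro ⟨wi, wj, WG⟩ hsub hmem
        have hmem' : some (BFmul hcl (wi, wj, WG) (0, 0, ⟨Ts, hTs⟩)) = some (wi, wj, WG) := hmem
        rw [S9aux.mrho hcl ⟨Ts, hTs⟩ wi wj WG] at hmem'
        have h' := Option.some.inj hmem'
        have h3 : WG.1 ∩ wShift wj Ts = WG.1 := congrArg (fun p : BF 𝓕 => p.2.2.1) h'
        exact hsub (by rw [← h3]; exact Set.inter_subset_right)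
      have haC : ¬ (G.1 ⊆ wShift j Ts) := by
        intro hsub
        have h1 : sInf G.1 ∈ G.1 := Nat.sInf_mem (hne _ G.2)
        have h2 := hsub h1
        rw [S9aux.mem_wShift, S9aux.seg_mem_iff hne hind hTs] at h2
        have h2' : sInf Ts ≤ sInf G.1 + j := h2
        omega
      -- leftover finite set
      have hLfin : {x : BF0 𝓕 | ∃ w : BF 𝓕, x = some w ∧ w.1 ≤ i ∧ w.2.1 ≤ j ∧
          sInf w.2.2.1 < sInf Ts ∧ w ≠ (i, j, G)}.Finite := by
        have himg : (fun x : BF0 𝓕 => x.elim ((0:ℕ), (0:ℕ), (0:ℕ)) (fun w => (w.1, w.2.1, sInf w.2.2.1))) ''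
            {x : BF0 𝓕 | ∃ w : BF 𝓕, x = some w ∧ w.1 ≤ i ∧ w.2.1 ≤ j ∧
              sInf w.2.2.1 < sInf Ts ∧ w ≠ (i, j, G)} ⊆
            (Set.Iic i) ×ˢ ((Set.Iic j) ×ˢ (Set.Iio (sInf Ts))) := by
          rintro p ⟨x, ⟨w, rfl, h1, h2, h3, -⟩, rfl⟩
          exact ⟨h1, h2, h3⟩
        refine Set.Finite.of_finite_image (Set.Finite.subset ?_ himg) ?_
        · exact (Set.finite_Iic i).prod ((Set.finite_Iic j).prod (Set.finite_Iio _))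
        · rintro x ⟨w, rfl, -, -, -, -⟩ y ⟨v, rfl, -, -, -, -⟩ hxy
          simp only [Option.elim, Prod.ext_iff] at hxy
          obtain ⟨e1, e2, e3⟩ := hxy
          have : w.2.2.1 = v.2.2.1 := S9aux.min_inj hne hind w.2.2.2 v.2.2.2 e3
          have hw : w = v := Prod.ext_iff.mpr ⟨e1, Prod.ext_iff.mpr ⟨e2, Subtype.ext this⟩⟩
          rw [hw]
      -- assemble
      have hcover : {(some (i, j, G) : BF0 𝓕)} =
          ({x : BF0 𝓕 | BF0mul hcl (some (i+1, 0, F₀)) (BF0mul hcl (some (0, i+1, F₀)) x) = x} ∪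
           ({x : BF0 𝓕 | BF0mul hcl (BF0mul hcl x (some (j+1, 0, F₀))) (some (0, j+1, F₀)) = x} ∪
            ({x : BF0 𝓕 | BF0mul hcl x (some (0, 0, ⟨Ts, hTs⟩)) = x} ∪
             {x : BF0 𝓕 | ∃ w : BF 𝓕, x = some w ∧ w.1 ≤ i ∧ w.2.1 ≤ j ∧
               sInf w.2.2.1 < sInf Ts ∧ w ≠ (i, j, G)})))ᶜ := by
        ext x
        simp only [Set.mem_singleton_iff, Set.mem_compl_iff, Set.mem_union]
        constructor
        · rintro rfl
          push_neg
          refine ⟨hEneg _ (Nat.lt_succ_self i), hFneg _ (Nat.lt_succ_self j), hCneg _ haC, ?_⟩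
          rintro ⟨w, hw, -, -, -, hne'⟩
          exact hne' (Option.some.inj hw).symm
        · intro hx
          push_neg at hx
          obtain ⟨hx1, hx2, hx3, hx4⟩ := hx
          match x with
          | none => exact absurd hEnone hx1
          | some w =>
            have hw1 : w.1 ≤ i := by
              by_contra hgt
              exact hx1 (hEpos w (by omega))
            have hw2 : w.2.1 ≤ j := by
              by_contra hgt
              exact hx2 (hFpos w (by omega))
            have hw3 : ¬ w.2.2.1 ⊆ wShift w.2.1 Ts := fun hsub => hx3 (hCpos w hsub)
            have hw4 : sInf w.2.2.1 < sInf Ts := by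
              obtain ⟨y, hy1, hy2⟩ := Set.not_subset.mp hw3
              have hle : sInf w.2.2.1 ≤ y := Nat.sInf_le hy1
              rw [S9aux.mem_wShift] at hy2
              have : ¬ sInf Ts ≤ y + w.2.1 := fun hh =>
                hy2 ((S9aux.seg_mem_iff hne hind hTs).mpr hh)
              omega
            by_contra hne'
            exact hx4 ⟨w, rfl, hw1, hw2, hw4, fun he => hne' (congrArg some he)⟩
      rw [hcover]
      rw [isOpen_compl_iff]
      exact ((hEcl.union (hFcl.union (hCcl.union (hLfin.isClosed)))))
    · -- the family is finite
      push_neg at hTex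
      have h𝓕fin : 𝓕.Finite := by
        refine Set.Finite.subset ((Set.finite_Iic (sInf G.1 + j)).image (fun n => Set.Ici n)) ?_
        intro T hT
        refine ⟨sInf T, ?_, (S9aux.seg_eq hne hind hT).symm⟩
        simp only [Set.mem_Iic]
        have := hTex T hT
        omega
      haveI : Finite {F : Set ℕ // F ∈ 𝓕} := h𝓕fin.to_subtype
      have hLfin : {x : BF0 𝓕 | ∃ w : BF 𝓕, x = some w ∧ w.1 ≤ i ∧ w.2.1 ≤ j ∧
          w ≠ (i, j, G)}.Finite := by
        have himg : (fun x : BF0 𝓕 => x.elim ((0:ℕ), (0:ℕ), G) (fun w => (w.1, w.2.1, w.2.2))) ''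
            {x : BF0 𝓕 | ∃ w : BF 𝓕, x = some w ∧ w.1 ≤ i ∧ w.2.1 ≤ j ∧ w ≠ (i, j, G)} ⊆
            (Set.Iic i) ×ˢ ((Set.Iic j) ×ˢ (Set.univ : Set {F : Set ℕ // F ∈ 𝓕})) := by
          rintro p ⟨x, ⟨w, rfl, h1, h2, -⟩, rfl⟩
          exact ⟨h1, h2, trivial⟩
        refine Set.Finite.of_finite_image (Set.Finite.subset ?_ himg) ?_
        · exact (Set.finite_Iic i).prod ((Set.finite_Iic j).prod Set.finite_univ)
        · rintro x ⟨w, rfl, -, -, -⟩ y ⟨v, rfl, -, -, -⟩ hxy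
          simp only [Option.elim, Prod.ext_iff] at hxy
          obtain ⟨e1, e2, e3⟩ := hxy
          have hw : w = v := Prod.ext_iff.mpr ⟨e1, Prod.ext_iff.mpr ⟨e2, e3⟩⟩
          rw [hw]
      have hcover : {(some (i, j, G) : BF0 𝓕)} =
          ({x : BF0 𝓕 | BF0mul hcl (some (i+1, 0, F₀)) (BF0mul hcl (some (0, i+1, F₀)) x) = x} ∪
           ({x : BF0 𝓕 | BF0mul hcl (BF0mul hcl x (some (j+1, 0, F₀))) (some (0, j+1, F₀)) = x} ∪
             {x : BF0 𝓕 | ∃ w : BF 𝓕, x = some w ∧ w.1 ≤ i ∧ w.2.1 ≤ j ∧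
               w ≠ (i, j, G)}))ᶜ := by
        ext x
        simp only [Set.mem_singleton_iff, Set.mem_compl_iff, Set.mem_union]
        constructor
        · rintro rfl
          push_neg
          refine ⟨hEneg _ (Nat.lt_succ_self i), hFneg _ (Nat.lt_succ_self j), ?_⟩
          rintro ⟨w, hw, -, -, hne'⟩
          exact hne' (Option.some.inj hw).symm
        · intro hx
          push_neg at hx
          obtain ⟨hx1, hx2, hx3⟩ := hx
          match x with
          | none => exact absurd hEnone hx1
          | some w =>
            have hw1 : w.1 ≤ i := by
              by_contra hgt
              exact hx1 (hEpos w (by omega))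
            have hw2 : w.2.1 ≤ j := by
              by_contra hgt
              exact hx2 (hFpos w (by omega))
            by_contra hne'
            exact hx3 ⟨w, rfl, hw1, hw2, fun he => hne' (congrArg some he)⟩
      rw [hcover]
      rw [isOpen_compl_iff]
      exact (hEcl.union (hFcl.union hLfin.isClosed))
  -- Step 2 : a compact open neighbourhood K of none
  have cptfin : ∀ s : Set (BF0 𝓕), IsCompact s → (∀ x ∈ s, x ≠ none) → s.Finite := by
    intro s hs hx
    obtain ⟨t, -, hcv⟩ := hs.elim_nhds_subcover (fun x => {x}) (fun x hx' => by
      match x, hx x hx' with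
      | some z, _ => exact (isol z).mem_nhds rfl
      | none, h => exact absurd rfl h)
    refine Set.Finite.subset t.finite_toSet (fun x hxs => ?_)
    have hx2 := hcv hxs
    simp only [Set.mem_iUnion, Set.mem_singleton_iff] at hx2
    obtain ⟨y, hyt, rfl⟩ := hx2
    exact hyt
  obtain ⟨K₀, hK₀nhds, -, hK₀cpt⟩ :=
    local_compact_nhds (x := (none : BF0 𝓕)) (n := Set.univ) Filter.univ_mem
  set K : Set (BF0 𝓕) := interior K₀ with hKdef
  have hKopen : IsOpen K := isOpen_interior
  have hKnone : none ∈ K := mem_interior_iff_mem_nhds.mpr hK₀nhds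
  have hKcpt : IsCompact K := by
    have hD : (K₀ \ K).Finite := cptfin _ (hK₀cpt.diff isOpen_interior)
      (fun x hx hxn => hx.2 (hxn ▸ hKnone))
    have hDopen : IsOpen (K₀ \ K) := by
      have he : K₀ \ K = ⋃ x ∈ K₀ \ K, {x} := (Set.biUnion_of_singleton _).symm
      rw [he]
      refine isOpen_biUnion (fun x hx => ?_)
      match x with
      | some z => exact isol z
      | none => exact absurd hKnone hx.2
    have heq : K = K₀ \ (K₀ \ K) := by
      ext x
      constructor
      · intro hx; exact ⟨interior_subset hx, fun h => h.2 hx⟩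
      · intro hx; by_contra h; exact hx.2 ⟨hx.1, h⟩
    rw [heq]
    exact hK₀cpt.diff hDopen
  have hKco : ∀ W : Set (BF0 𝓕), IsOpen W → none ∈ W → (K \ W).Finite := by
    intro W hWo hWn
    exact cptfin _ (hKcpt.diff hWo) (fun x hx hxn => hx.2 (hxn ▸ hWn))
  -- Step 3 : Y and X
  set Y : Set (BF 𝓕) := {z | some z ∈ K} with hYdef
  set X : Set (BF 𝓕) := {z | some z ∉ K} with hXdef
  have hYinf : ¬ Y.Finite := by
    intro hYfin
    apply hni
    have heq : ({none} : Set (BF0 𝓕)) = K \ (some '' Y) := by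
      ext x
      constructor
      · rintro rfl
        exact ⟨hKnone, by rintro ⟨z, -, hz⟩; exact Option.some_ne_none z hz⟩
      · rintro ⟨hx1, hx2⟩
        match x with
        | none => rfl
        | some z => exact absurd ⟨z, hx1, rfl⟩ hx2
    rw [heq]
    exact hKopen.sdiff ((hYfin.image some).isClosed)
  have excL : ∀ a : BF 𝓕, {y : BF 𝓕 | y ∈ Y ∧ BFmul hcl a y ∈ X}.Finite := by
    intro a
    have hWo : IsOpen ((fun x => BF0mul hcl (some a) x) ⁻¹' K) :=
      hKopen.preimage (hsc (some a)).1
    have hWn : (none : BF0 𝓕) ∈ (fun x => BF0mul hcl (some a) x) ⁻¹' K := hKnone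
    have hfin := hKco _ hWo hWn
    have hsub : some '' {y : BF 𝓕 | y ∈ Y ∧ BFmul hcl a y ∈ X} ⊆
        K \ ((fun x => BF0mul hcl (some a) x) ⁻¹' K) := by
      rintro x ⟨y, ⟨hy1, hy2⟩, rfl⟩
      exact ⟨hy1, hy2⟩
    exact Set.Finite.of_finite_image (hfin.subset hsub) (Option.some_injective _).injOn
  have excR : ∀ a : BF 𝓕, {y : BF 𝓕 | y ∈ Y ∧ BFmul hcl y a ∈ X}.Finite := by
    intro a
    have hWo : IsOpen ((fun x => BF0mul hcl x (some a)) ⁻¹' K) :=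
      hKopen.preimage (hsc (some a)).2
    have hWn : (none : BF0 𝓕) ∈ (fun x => BF0mul hcl x (some a)) ⁻¹' K := hKnone
    have hfin := hKco _ hWo hWn
    have hsub : some '' {y : BF 𝓕 | y ∈ Y ∧ BFmul hcl y a ∈ X} ⊆
        K \ ((fun x => BF0mul hcl x (some a)) ⁻¹' K) := by
      rintro x ⟨y, ⟨hy1, hy2⟩, rfl⟩
      exact ⟨hy1, hy2⟩
    exact Set.Finite.of_finite_image (hfin.subset hsub) (Option.some_injective _).injOn
  -- level sets
  set XF : {F : Set ℕ // F ∈ 𝓕} → Set (ℕ × ℕ) :=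
    fun Gb => {p | ((p.1, p.2, Gb) : BF 𝓕) ∈ X} with hXFdef
  set YF : {F : Set ℕ // F ∈ 𝓕} → Set (ℕ × ℕ) :=
    fun Gb => {p | ((p.1, p.2, Gb) : BF 𝓕) ∈ Y} with hYFdef
  have notY : ∀ z : BF 𝓕, z ∉ Y → z ∈ X := fun z hz => hz
  have notX : ∀ z : BF 𝓕, z ∉ X → z ∈ Y := fun z hz => not_not.mp hz
  -- dichotomy on every level
  have dich : ∀ Gb, (XF Gb).Finite ∨ (YF Gb).Finite := by
    intro Gb
    have h1 : {p | p ∈ XF Gb ∧ (p.1 + 1, p.2) ∉ XF Gb}.Finite := by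
      have hsub : (fun p : ℕ × ℕ => ((p.1 + 1, p.2, Gb) : BF 𝓕)) ''
          {p | p ∈ XF Gb ∧ (p.1 + 1, p.2) ∉ XF Gb} ⊆
          {y : BF 𝓕 | y ∈ Y ∧ BFmul hcl (0, 1, F₀) y ∈ X} := by
        rintro z ⟨p, ⟨hp1, hp2⟩, rfl⟩
        refine ⟨notX _ hp2, ?_⟩
        rw [S9aux.mE1 hcl F₀ htop 1 (p.1 + 1) p.2 Gb (by omega)]
        have he : p.1 + 1 - 1 = p.1 := by omega
        rw [he]
        exact hp1
      refine Set.Finite.of_finite_image ((excL (0, 1, F₀)).subset hsub) ?_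
      rintro p - q - h
      have e1 : p.1 + 1 = q.1 + 1 := congrArg Prod.fst h
      have e2 : p.2 = q.2 := congrArg (fun z : BF 𝓕 => z.2.1) h
      exact Prod.ext_iff.mpr ⟨by omega, e2⟩
    have h2 : {p | p ∈ XF Gb ∧ (p.1, p.2 + 1) ∉ XF Gb}.Finite := by
      have hsub : (fun p : ℕ × ℕ => ((p.1, p.2 + 1, Gb) : BF 𝓕)) ''
          {p | p ∈ XF Gb ∧ (p.1, p.2 + 1) ∉ XF Gb} ⊆
          {y : BF 𝓕 | y ∈ Y ∧ BFmul hcl y (1, 0, F₀) ∈ X} := by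
        rintro z ⟨p, ⟨hp1, hp2⟩, rfl⟩
        refine ⟨notX _ hp2, ?_⟩
        rw [S9aux.mF1 hcl F₀ htop 1 p.1 (p.2 + 1) Gb (by omega)]
        have he : p.2 + 1 - 1 = p.2 := by omega
        rw [he]
        exact hp1
      refine Set.Finite.of_finite_image ((excR (1, 0, F₀)).subset hsub) ?_
      rintro p - q - h
      have e1 : p.1 = q.1 := congrArg (fun z : BF 𝓕 => z.1) h
      have e2 : p.2 + 1 = q.2 + 1 := congrArg (fun z : BF 𝓕 => z.2.1) h
      exact Prod.ext_iff.mpr ⟨e1, by omega⟩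
    have h3 : {p | p ∉ XF Gb ∧ (p.1 + 1, p.2) ∈ XF Gb}.Finite := by
      have hsub : (fun p : ℕ × ℕ => ((p.1, p.2, Gb) : BF 𝓕)) ''
          {p | p ∉ XF Gb ∧ (p.1 + 1, p.2) ∈ XF Gb} ⊆
          {y : BF 𝓕 | y ∈ Y ∧ BFmul hcl (1, 0, F₀) y ∈ X} := by
        rintro z ⟨p, ⟨hp1, hp2⟩, rfl⟩
        refine ⟨notX _ hp1, ?_⟩
        rw [S9aux.mc2 hcl F₀ htop 1 p.1 p.2 Gb]
        have he : 1 + p.1 = p.1 + 1 := by omega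
        rw [he]
        exact hp2
      refine Set.Finite.of_finite_image ((excL (1, 0, F₀)).subset hsub) ?_
      rintro p - q - h
      have e1 : p.1 = q.1 := congrArg (fun z : BF 𝓕 => z.1) h
      have e2 : p.2 = q.2 := congrArg (fun z : BF 𝓕 => z.2.1) h
      exact Prod.ext_iff.mpr ⟨e1, e2⟩
    have h4 : {p | p ∉ XF Gb ∧ (p.1, p.2 + 1) ∈ XF Gb}.Finite := by
      have hsub : (fun p : ℕ × ℕ => ((p.1, p.2, Gb) : BF 𝓕)) ''
          {p | p ∉ XF Gb ∧ (p.1, p.2 + 1) ∈ XF Gb} ⊆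
          {y : BF 𝓕 | y ∈ Y ∧ BFmul hcl y (0, 1, F₀) ∈ X} := by
        rintro z ⟨p, ⟨hp1, hp2⟩, rfl⟩
        refine ⟨notX _ hp1, ?_⟩
        rw [S9aux.mc5 hcl F₀ htop 1 p.1 p.2 Gb]
        have he : 1 + p.2 = p.2 + 1 := by omega
        rw [he]
        exact hp2
      refine Set.Finite.of_finite_image ((excR (0, 1, F₀)).subset hsub) ?_
      rintro p - q - h
      have e1 : p.1 = q.1 := congrArg (fun z : BF 𝓕 => z.1) h
      have e2 : p.2 = q.2 := congrArg (fun z : BF 𝓕 => z.2.1) h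
      exact Prod.ext_iff.mpr ⟨e1, e2⟩
    rcases S9aux.grid (XF Gb) h1 h2 h3 h4 with h | h
    · exact Or.inl h
    · right
      exact h.subset (fun p hp hmem => hmem hp)
  have univNotFin : ¬ (Set.univ : Set ℕ).Finite := Set.infinite_univ
  -- downward propagation of X-heaviness
  have propDown : ∀ Fb Gb : {F : Set ℕ // F ∈ 𝓕}, Fb.1 ⊆ Gb.1 →
      (YF Fb).Finite → (YF Gb).Finite := by
    intro Fb Gb hsub hFbfin
    have hJ1 : {n : ℕ | (0, n) ∈ YF Fb}.Finite := by
      refine Set.Finite.preimage (f := fun n : ℕ => ((0 : ℕ), n)) ?_ hFbfin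
      rintro n - m - h
      exact congrArg Prod.snd h
    have hJ2 : {n : ℕ | (0, n) ∈ YF Gb ∧ (0, n) ∉ YF Fb}.Finite := by
      have hsub2 : (fun n : ℕ => ((0, n, Gb) : BF 𝓕)) ''
          {n : ℕ | (0, n) ∈ YF Gb ∧ (0, n) ∉ YF Fb} ⊆
          {y : BF 𝓕 | y ∈ Y ∧ BFmul hcl (0, 0, Fb) y ∈ X} := by
        rintro z ⟨n, ⟨hn1, hn2⟩, rfl⟩
        refine ⟨hn1, ?_⟩
        have hprod : BFmul hcl ((0 : ℕ), (0 : ℕ), Fb) ((0 : ℕ), n, Gb) = (0, n, Fb) := by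
          rw [S9aux.mlam hcl Fb 0 n Gb]
          refine Prod.ext_iff.mpr ⟨rfl, Prod.ext_iff.mpr ⟨rfl, Subtype.ext ?_⟩⟩
          show wShift 0 Fb.1 ∩ Gb.1 = Fb.1
          rw [S9aux.wShift_zero]
          exact Set.inter_eq_left.mpr hsub
        rw [hprod]
        exact notY _ hn2
      refine Set.Finite.of_finite_image ((excL ((0 : ℕ), (0 : ℕ), Fb)).subset hsub2) ?_
      rintro n - m - h
      exact congrArg (fun z : BF 𝓕 => z.2.1) h
    have hJ : {n : ℕ | (0, n) ∈ YF Gb}.Finite := by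
      refine Set.Finite.subset (hJ1.union hJ2) ?_
      intro n hn
      by_cases hf : (0, n) ∈ YF Fb
      · exact Or.inl hf
      · exact Or.inr ⟨hn, hf⟩
    rcases dich Gb with h | h
    · exfalso
      have hXn : {n : ℕ | (0, n) ∈ XF Gb}.Finite := by
        refine Set.Finite.preimage (f := fun n : ℕ => ((0 : ℕ), n)) ?_ h
        rintro n - m - hm
        exact congrArg Prod.snd hm
      refine univNotFin (Set.Finite.subset (hJ.union hXn) (fun n _ => ?_))
      by_cases hy : (0, n) ∈ YF Gb
      · exact Or.inl hy
      · exact Or.inr (notY _ hy)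
    · exact h
  -- upward propagation of X-heaviness
  have propUp : ∀ Hb : {F : Set ℕ // F ∈ 𝓕},
      (YF ⟨F₀.1 ∩ wShift 1 Hb.1, hcl 1 F₀.1 F₀.2 Hb.1 Hb.2⟩).Finite → (YF Hb).Finite := by
    intro Hb hPfin
    have hJ1 : {n : ℕ | ((0 : ℕ), n + 1) ∈ YF ⟨F₀.1 ∩ wShift 1 Hb.1, hcl 1 F₀.1 F₀.2 Hb.1 Hb.2⟩}.Finite := by
      refine Set.Finite.preimage (f := fun n : ℕ => ((0 : ℕ), n + 1)) ?_ hPfin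
      rintro n - m - h
      have h2 := congrArg (fun q : ℕ × ℕ => q.2) h
      have h3 : n + 1 = m + 1 := h2
      omega
    have hJ2 : {n : ℕ | (0, n) ∈ YF Hb ∧
        ((0 : ℕ), n + 1) ∉ YF ⟨F₀.1 ∩ wShift 1 Hb.1, hcl 1 F₀.1 F₀.2 Hb.1 Hb.2⟩}.Finite := by
      have hsub2 : (fun n : ℕ => ((0, n, Hb) : BF 𝓕)) ''
          {n : ℕ | (0, n) ∈ YF Hb ∧
            ((0 : ℕ), n + 1) ∉ YF ⟨F₀.1 ∩ wShift 1 Hb.1, hcl 1 F₀.1 F₀.2 Hb.1 Hb.2⟩} ⊆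
          {y : BF 𝓕 | y ∈ Y ∧ BFmul hcl (0, 1, F₀) y ∈ X} := by
        rintro z ⟨n, ⟨hn1, hn2⟩, rfl⟩
        refine ⟨hn1, ?_⟩
        rw [S9aux.mE2 hcl F₀ 1 0 n Hb (by omega)]
        exact notY _ hn2
      refine Set.Finite.of_finite_image ((excL ((0 : ℕ), (1 : ℕ), F₀)).subset hsub2) ?_
      rintro n - m - h
      exact congrArg (fun z : BF 𝓕 => z.2.1) h
    have hJ : {n : ℕ | (0, n) ∈ YF Hb}.Finite := by
      refine Set.Finite.subset (hJ1.union hJ2) ?_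
      intro n hn
      by_cases hf : ((0 : ℕ), n + 1) ∈ YF ⟨F₀.1 ∩ wShift 1 Hb.1, hcl 1 F₀.1 F₀.2 Hb.1 Hb.2⟩
      · exact Or.inl hf
      · exact Or.inr ⟨hn, hf⟩
    rcases dich Hb with h | h
    · exfalso
      have hXn : {n : ℕ | (0, n) ∈ XF Hb}.Finite := by
        refine Set.Finite.preimage (f := fun n : ℕ => ((0 : ℕ), n)) ?_ h
        rintro n - m - hm
        exact congrArg Prod.snd hm
      refine univNotFin (Set.Finite.subset (hJ.union hXn) (fun n _ => ?_))
      by_cases hy : (0, n) ∈ YF Hb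
      · exact Or.inl hy
      · exact Or.inr (notY _ hy)
    · exact h
  -- propagation to all levels
  have allLevels : (∃ Fb, (YF Fb).Finite) → ∀ Gb, (YF Gb).Finite := by
    rintro ⟨Fb, hFb⟩
    have key : ∀ n : ℕ, ∀ Gb : {F : Set ℕ // F ∈ 𝓕},
        sInf Gb.1 ≤ sInf Fb.1 + n → (YF Gb).Finite := by
      intro n
      induction n with
      | zero =>
        intro Gb hGb
        refine propDown Fb Gb ?_ hFb
        intro x hx
        rw [S9aux.seg_mem_iff hne hind Gb.2]
        have := (S9aux.seg_mem_iff hne hind Fb.2).mp hx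
        omega
      | succ k ih =>
        intro Gb hGb
        by_cases hle : sInf Gb.1 ≤ sInf Fb.1 + k
        · exact ih Gb hle
        · have hF₀le : sInf F₀.1 ≤ sInf Fb.1 := hminF₀ _ Fb.2
          have hseteq : F₀.1 ∩ wShift 1 Gb.1 = Set.Ici (sInf Gb.1 - 1) := by
            conv_lhs => rw [S9aux.seg_eq hne hind F₀.2, S9aux.seg_eq hne hind Gb.2]
            rw [S9aux.wShift_Ici, Set.Ici_inter_Ici]
            congr 1
            have : max (sInf F₀.1) (sInf Gb.1 - 1) = sInf Gb.1 - 1 :=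
              max_eq_right (by omega)
            rw [this]
          refine propUp Gb (ih _ ?_)
          show sInf (F₀.1 ∩ wShift 1 Gb.1) ≤ sInf Fb.1 + k
          rw [hseteq, csInf_Ici]
          omega
    intro Gb
    rcases le_or_gt (sInf Gb.1) (sInf Fb.1) with h | h
    · exact key 0 Gb (by omega)
    · exact key (sInf Gb.1 - sInf Fb.1) Gb (by omega)
  -- if every level is X-heavy then Y is finite, contradiction
  have YFin : (∀ Gb, (YF Gb).Finite) → False := by
    intro hall
    have hray : ∀ Gb : {F : Set ℕ // F ∈ 𝓕},
        (∀ y ∈ {y : BF 𝓕 | y ∈ Y ∧ BFmul hcl (1, 0, F₀) y ∈ X}, y.2.2 ≠ Gb) →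
        YF Gb = ∅ := by
      intro Gb hno
      by_contra hne'
      obtain ⟨p, hp⟩ := Set.nonempty_iff_ne_empty.mpr hne'
      have hstep : ∀ k : ℕ, (p.1 + k, p.2) ∈ YF Gb := by
        intro k
        induction k with
        | zero => simpa using hp
        | succ m ihm =>
          by_contra hX'
          have hmemX : BFmul hcl ((1 : ℕ), (0 : ℕ), F₀) (p.1 + m, p.2, Gb) ∈ X := by
            rw [S9aux.mc2 hcl F₀ htop 1 (p.1 + m) p.2 Gb]
            have he : 1 + (p.1 + m) = p.1 + (m + 1) := by omega
            rw [he]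
            exact notY _ hX'
          exact hno _ ⟨ihm, hmemX⟩ rfl
      have huniv : (Set.univ : Set ℕ).Finite := by
        refine Set.Finite.subset (Set.Finite.preimage (f := fun k : ℕ => (p.1 + k, p.2))
          ?_ (hall Gb)) (fun k _ => hstep k)
        rintro a - b - h
        have h2 := congrArg (fun q : ℕ × ℕ => q.1) h
        have h3 : p.1 + a = p.1 + b := h2
        omega
      exact univNotFin huniv
    have hYfin : Y.Finite := by
      have hcov : Y ⊆ ⋃ y ∈ {y : BF 𝓕 | y ∈ Y ∧ BFmul hcl (1, 0, F₀) y ∈ X},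
          {z : BF 𝓕 | z.2.2 = y.2.2 ∧ (z.1, z.2.1) ∈ YF y.2.2} := by
        intro z hz
        by_contra hnotin
        have hno : ∀ y ∈ {y : BF 𝓕 | y ∈ Y ∧ BFmul hcl (1, 0, F₀) y ∈ X}, y.2.2 ≠ z.2.2 := by
          intro y hy he
          refine hnotin (Set.mem_biUnion hy ⟨he.symm, ?_⟩)
          rw [he]
          exact hz
        have hzero := hray z.2.2 hno
        have hzin : (z.1, z.2.1) ∈ YF z.2.2 := hz
        rw [hzero] at hzin
        exact hzin
      refine Set.Finite.subset (Set.Finite.biUnion (excL ((1 : ℕ), (0 : ℕ), F₀)) (fun y hy => ?_)) hcov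
      have hsub : (fun z : BF 𝓕 => (z.1, z.2.1)) ''
          {z : BF 𝓕 | z.2.2 = y.2.2 ∧ (z.1, z.2.1) ∈ YF y.2.2} ⊆ YF y.2.2 := by
        rintro q ⟨z, ⟨-, hm⟩, rfl⟩
        exact hm
      refine Set.Finite.of_finite_image ((hall y.2.2).subset hsub) ?_
      rintro z ⟨he, -⟩ z' ⟨he', -⟩ hq
      have hq' : (z.1, z.2.1) = (z'.1, z'.2.1) := hq
      rw [Prod.ext_iff] at hq'
      obtain ⟨e1, e2⟩ := hq'
      have e3 : z.2.2 = z'.2.2 := he.trans he'.symm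
      exact Prod.ext_iff.mpr ⟨e1, Prod.ext_iff.mpr ⟨e2, e3⟩⟩
    exact hYinf hYfin
  -- if every level is Y-heavy then X is finite
  have XFin : (∀ Gb, (XF Gb).Finite) → X.Finite := by
    intro hall
    have hray : ∀ Gb : {F : Set ℕ // F ∈ 𝓕},
        (∀ y ∈ {y : BF 𝓕 | y ∈ Y ∧ BFmul hcl (0, 1, F₀) y ∈ X}, y.2.2 ≠ Gb) →
        XF Gb = ∅ := by
      intro Gb hno
      by_contra hne'
      obtain ⟨p, hp⟩ := Set.nonempty_iff_ne_empty.mpr hne'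
      have hstep : ∀ k : ℕ, (p.1 + k, p.2) ∈ XF Gb := by
        intro k
        induction k with
        | zero => simpa using hp
        | succ m ihm =>
          by_contra hY'
          have hyY : ((p.1 + (m + 1), p.2, Gb) : BF 𝓕) ∈ Y := notX _ hY'
          have hmemX : BFmul hcl ((0 : ℕ), (1 : ℕ), F₀) (p.1 + (m + 1), p.2, Gb) ∈ X := by
            rw [S9aux.mE1 hcl F₀ htop 1 (p.1 + (m + 1)) p.2 Gb (by omega)]
            have he : p.1 + (m + 1) - 1 = p.1 + m := by omega
            rw [he]
            exact ihm
          exact hno _ ⟨hyY, hmemX⟩ rfl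
      have huniv : (Set.univ : Set ℕ).Finite := by
        refine Set.Finite.subset (Set.Finite.preimage (f := fun k : ℕ => (p.1 + k, p.2))
          ?_ (hall Gb)) (fun k _ => hstep k)
        rintro a - b - h
        have h2 := congrArg (fun q : ℕ × ℕ => q.1) h
        have h3 : p.1 + a = p.1 + b := h2
        omega
      exact univNotFin huniv
    have hcov : X ⊆ ⋃ y ∈ {y : BF 𝓕 | y ∈ Y ∧ BFmul hcl (0, 1, F₀) y ∈ X},
        {z : BF 𝓕 | z.2.2 = y.2.2 ∧ (z.1, z.2.1) ∈ XF y.2.2} := by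
      intro z hz
      by_contra hnotin
      have hno : ∀ y ∈ {y : BF 𝓕 | y ∈ Y ∧ BFmul hcl (0, 1, F₀) y ∈ X}, y.2.2 ≠ z.2.2 := by
        intro y hy he
        refine hnotin (Set.mem_biUnion hy ⟨he.symm, ?_⟩)
        rw [he]
        exact hz
      have hzero := hray z.2.2 hno
      have hzin : (z.1, z.2.1) ∈ XF z.2.2 := hz
      rw [hzero] at hzin
      exact hzin
    refine Set.Finite.subset (Set.Finite.biUnion (excL ((0 : ℕ), (1 : ℕ), F₀)) (fun y hy => ?_)) hcov
    have hsub : (fun z : BF 𝓕 => (z.1, z.2.1)) ''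
        {z : BF 𝓕 | z.2.2 = y.2.2 ∧ (z.1, z.2.1) ∈ XF y.2.2} ⊆ XF y.2.2 := by
      rintro q ⟨z, ⟨-, hm⟩, rfl⟩
      exact hm
    refine Set.Finite.of_finite_image ((hall y.2.2).subset hsub) ?_
    rintro z ⟨he, -⟩ z' ⟨he', -⟩ hq
    have hq' : (z.1, z.2.1) = (z'.1, z'.2.1) := hq
    rw [Prod.ext_iff] at hq'
    obtain ⟨e1, e2⟩ := hq'
    have e3 : z.2.2 = z'.2.2 := he.trans he'.symm
    exact Prod.ext_iff.mpr ⟨e1, Prod.ext_iff.mpr ⟨e2, e3⟩⟩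
  -- X is finite
  have hXfin : X.Finite := by
    by_cases hex : ∃ Gb, (YF Gb).Finite
    · exact absurd (allLevels hex) YFin
    · push_neg at hex
      exact XFin (fun Gb => (dich Gb).resolve_right (hex Gb))
  -- conclusion
  have hfinal : Uᶜ ⊆ (K \ interior U) ∪ (some '' X) := by
    intro x hx
    by_cases hxK : x ∈ K
    · exact Or.inl ⟨hxK, fun h => hx (interior_subset h)⟩
    · right
      match x with
      | none => exact absurd hKnone hxK
      | some z => exact ⟨z, hxK, rfl⟩
  exact Set.Finite.subset
    ((hKco _ isOpen_interior (mem_interior_iff_mem_nhds.mpr hU)).union (hXfin.image some)) hfinal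
end

section
/- Let 𝓕 be an ω-closed family of nonempty inductive subsets of ω and let S = B_ω^𝓕 ∪ {0} be B_ω^𝓕 with an adjoined zero. Then there is exactly one compact Hausdorff shift-continuous topology on S, namely the topology in which every element of B_ω^𝓕 is isolated and the neighbourhoods of 0 are exactly the sets U ⊆ S with 0 ∈ U and S \ U finite. -/
section Aux
variable {𝓕 : Set (Set ℕ)} (hcl : OmegaClosed 𝓕)
  (hne : ∀ F ∈ 𝓕, F.Nonempty) (hind : ∀ F ∈ 𝓕, InductiveSet F)

noncomputable def mF (G : {F : Set ℕ // F ∈ 𝓕}) : ℕ := sInf G.1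

include hne hind in
lemma eq_Ici (G : {F : Set ℕ // F ∈ 𝓕}) : G.1 = Set.Ici (mF G) := by
  ext x
  constructor
  · intro hx; exact Nat.sInf_le hx
  · intro hx
    have h0 : sInf G.1 ∈ G.1 := Nat.sInf_mem (hne _ G.2)
    have key : ∀ k : ℕ, sInf G.1 + k ∈ G.1 := by
      intro k; induction k with
      | zero => simpa using h0
      | succ n ih => exact hind _ G.2 _ ih
    have : x = sInf G.1 + (x - sInf G.1) := by
      have : mF G ≤ x := hx
      simp [mF] at this; omega
    rw [this]; exact key _

include hne hind in
lemma mF_inj {G G' : {F : Set ℕ // F ∈ 𝓕}} (h : mF G = mF G') : G = G' := by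
  apply Subtype.ext
  rw [eq_Ici hne hind G, eq_Ici hne hind G', h]

lemma wShift_Ici (k m : ℕ) : wShift k (Set.Ici m) = Set.Ici (m - k) := by
  ext x; simp only [wShift, Set.mem_setOf_eq, Set.mem_Ici]; omega

include hne hind in
lemma BF_ext {x y : BF 𝓕} (h1 : x.1 = y.1) (h2 : x.2.1 = y.2.1)
    (h3 : mF x.2.2 = mF y.2.2) : x = y := by
  obtain ⟨x1, x2, X⟩ := x; obtain ⟨y1, y2, Y⟩ := y
  simp only at h1 h2 h3
  subst h1; subst h2
  rw [mF_inj hne hind h3]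

lemma mul_fst (a b : BF 𝓕) :
    (BFmul hcl a b).1 = if a.2.1 ≤ b.1 then a.1 + (b.1 - a.2.1) else a.1 := by
  unfold BFmul; split_ifs <;> rfl

lemma mul_snd (a b : BF 𝓕) :
    (BFmul hcl a b).2.1 = if a.2.1 ≤ b.1 then b.2.1 else b.2.1 + (a.2.1 - b.1) := by
  unfold BFmul; split_ifs <;> rfl

include hne hind in
lemma mul_mF (a b : BF 𝓕) :
    mF (BFmul hcl a b).2.2 =
      if a.2.1 ≤ b.1 then max (mF a.2.2 - (b.1 - a.2.1)) (mF b.2.2)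
      else max (mF a.2.2) (mF b.2.2 - (a.2.1 - b.1)) := by
  unfold BFmul
  split_ifs with h
  · show sInf (wShift (b.1 - a.2.1) a.2.2.1 ∩ b.2.2.1) = _
    rw [eq_Ici hne hind a.2.2, eq_Ici hne hind b.2.2, wShift_Ici,
      Set.Ici_inter_Ici, csInf_Ici]

  · show sInf (a.2.2.1 ∩ wShift (a.2.1 - b.1) b.2.2.1) = _
    rw [eq_Ici hne hind a.2.2, eq_Ici hne hind b.2.2, wShift_Ici,
      Set.Ici_inter_Ici, csInf_Ici]


end Aux

section Aux2
variable {𝓕 : Set (Set ℕ)} (hcl : OmegaClosed 𝓕)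
  (hne : ∀ F ∈ 𝓕, F.Nonempty) (hind : ∀ F ∈ 𝓕, InductiveSet F)

include hne hind in
lemma left_id (m : ℕ) (G : {F : Set ℕ // F ∈ 𝓕}) (x : BF 𝓕)
    (h1 : m ≤ x.1) (h2 : mF G - (x.1 - m) ≤ mF x.2.2) :
    BFmul hcl (m, m, G) x = x := by
  apply BF_ext hne hind
  · rw [mul_fst]; simp only; split_ifs with h <;> omega
  · rw [mul_snd]; simp only; split_ifs with h <;> omega
  · rw [mul_mF hcl hne hind]; simp only; split_ifs with h <;> omega

include hne hind in
lemma right_id (m : ℕ) (G : {F : Set ℕ // F ∈ 𝓕}) (x : BF 𝓕)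
    (h1 : m ≤ x.2.1) (h2 : mF G - (x.2.1 - m) ≤ mF x.2.2) :
    BFmul hcl x (m, m, G) = x := by
  apply BF_ext hne hind
  · rw [mul_fst]; simp only; split_ifs with h <;> omega
  · rw [mul_snd]; simp only; split_ifs with h <;> omega
  · rw [mul_mF hcl hne hind]; simp only; split_ifs with h <;> omega

-- box finiteness
include hne hind in
lemma box_finite (N : ℕ) :
    {y : BF 𝓕 | y.1 ≤ N ∧ y.2.1 ≤ N ∧ mF y.2.2 ≤ N}.Finite := by
  apply Set.Finite.of_finite_image (f := fun y : BF 𝓕 => (y.1, y.2.1, mF y.2.2))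
  · apply Set.Finite.subset (Set.Finite.prod (Set.finite_Iic N)
      (Set.Finite.prod (Set.finite_Iic N) (Set.finite_Iic N)))
    rintro ⟨a, b, c⟩ ⟨y, ⟨hy1, hy2, hy3⟩, heq⟩
    simp only [Prod.mk.injEq] at heq
    obtain ⟨e1, e2, e3⟩ := heq
    exact ⟨by simp [← e1, hy1], by simp [← e2, hy2], by simp [← e3, hy3]⟩
  · rintro y _ z _ heq
    simp only [Prod.mk.injEq] at heq
    exact BF_ext hne hind heq.1 heq.2.1 heq.2.2

-- fiber finiteness
include hne hind in
lemma fiber_left (a c : BF 𝓕) : {b : BF 𝓕 | BFmul hcl a b = c}.Finite := by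
  apply Set.Finite.subset (box_finite hne hind (a.1 + a.2.1 + c.1 + c.2.1 + mF c.2.2))
  intro b hb
  simp only [Set.mem_setOf_eq] at hb ⊢
  have h1 := congrArg Prod.fst hb
  have h2 := congrArg (fun z : BF 𝓕 => z.2.1) hb
  have h3 := congrArg (fun z : BF 𝓕 => mF z.2.2) hb
  simp only [mul_fst hcl, mul_snd hcl, mul_mF hcl hne hind] at h1 h2 h3
  split_ifs at h1 h2 h3 with h <;> omega

include hne hind in
lemma fiber_right (a c : BF 𝓕) : {b : BF 𝓕 | BFmul hcl b a = c}.Finite := by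
  apply Set.Finite.subset (box_finite hne hind (a.1 + a.2.1 + c.1 + c.2.1 + mF c.2.2))
  intro b hb
  simp only [Set.mem_setOf_eq] at hb ⊢
  have h1 := congrArg Prod.fst hb
  have h2 := congrArg (fun z : BF 𝓕 => z.2.1) hb
  have h3 := congrArg (fun z : BF 𝓕 => mF z.2.2) hb
  simp only [mul_fst hcl, mul_snd hcl, mul_mF hcl hne hind] at h1 h2 h3
  split_ifs at h1 h2 h3 with h <;> omega

end Aux2

open Filter Topology

section Filters
variable {α : Type*}

lemma regionContra {S : Type*} [TopologicalSpace S] [T2Space S] {a : S} {K : Filter S}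
    (hKne : K.NeBot) (hK : K ≤ 𝓝 a) {Q : Set S} (hQ : Q ∈ K) {g : S → S}
    (hg : Continuous g) (hid : ∀ z ∈ Q, g z = z) (hga : g a ≠ a) : False := by
  have h1 : Filter.map g K ≤ 𝓝 (g a) := le_trans (Filter.map_mono hK) (hg.tendsto a)
  have h2 : Filter.map g K ≤ K := by
    intro U hU
    rw [Filter.mem_map]
    refine Filter.mem_of_superset (Filter.inter_mem hU hQ) ?_
    rintro z ⟨hz1, hz2⟩
    simpa [hid z hz2] using hz1
  haveI : (Filter.map g K).NeBot := Filter.map_neBot (hf := hKne)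
  have : (𝓝 (g a) ⊓ 𝓝 a).NeBot := Filter.neBot_of_le (le_inf h1 (le_trans h2 hK))
  exact hga (t2_iff_nhds.mp ‹T2Space S› this)

lemma finiteContra {S : Type*} [TopologicalSpace S] [T1Space S] {a : S} {K : Filter S}
    (hKne : K.NeBot) (hK : K ≤ 𝓝 a) {Q : Set S} (hQ : Q ∈ K) (hfin : Q.Finite)
    (ha : a ∉ Q) : False := by
  have : a ∈ closure Q := by
    rw [mem_closure_iff_nhds]
    intro t ht
    exact Filter.nonempty_of_mem (hf := hKne) (Filter.inter_mem (hK ht) hQ)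
  rw [hfin.isClosed.closure_eq] at this
  exact ha this

lemma freq_or {K : Filter α} (hKne : K.NeBot) {Q A B : Set α} (hQ : Q ∈ K)
    (h : Q ⊆ A ∪ B) : (K ⊓ 𝓟 A).NeBot ∨ (K ⊓ 𝓟 B).NeBot := by
  by_contra hc
  push_neg at hc
  obtain ⟨h1, h2⟩ := hc
  rw [Filter.inf_principal_eq_bot] at h1 h2
  have := Filter.inter_mem (Filter.inter_mem hQ h1) h2
  obtain ⟨z, ⟨hz1, hz2⟩, hz3⟩ := Filter.nonempty_of_mem (hf := hKne) this
  rcases h hz1 with h' | h'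
  · exact hz2 h'
  · exact hz3 h'

lemma freq_index {ι : Type*} {K : Filter α} (hKne : K.NeBot) (T : Finset ι)
    (Q : ι → Set α) {R : Set α} (hR : R ∈ K) (hsub : R ⊆ ⋃ i ∈ T, Q i) :
    ∃ i ∈ T, (K ⊓ 𝓟 (Q i)).NeBot := by
  by_contra hc
  push_neg at hc
  have hc' : ∀ i ∈ T, (Q i)ᶜ ∈ K := by
    intro i hi
    have := hc i hi
    rw [Filter.inf_principal_eq_bot] at this
    exact this
  have hint : (⋂ i ∈ T, (Q i)ᶜ) ∈ K := (Filter.biInter_finset_mem T).mpr hc'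
  obtain ⟨z, hz1, hz2⟩ := Filter.nonempty_of_mem (hf := hKne) (Filter.inter_mem hR hint)
  obtain ⟨_, ⟨i, rfl⟩, _, ⟨hi, rfl⟩, hzi⟩ := hsub hz1
  have := Set.mem_iInter₂.mp hz2 i hi
  exact this hzi

end Filters

section Iso
variable {𝓕 : Set (Set ℕ)} (hcl : OmegaClosed 𝓕)
  (hne : ∀ F ∈ 𝓕, F.Nonempty) (hind : ∀ F ∈ 𝓕, InductiveSet F)

def liftS (P : BF 𝓕 → Prop) : Set (BF0 𝓕) := {z | ∃ y, z = some y ∧ P y}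

lemma liftS_finite {P : BF 𝓕 → Prop} (h : {y | P y}.Finite) : (liftS P).Finite := by
  apply Set.Finite.subset (h.image some)
  rintro z ⟨y, rfl, hy⟩
  exact ⟨y, hy, rfl⟩

include hne hind in
lemma moveL (G : {F : Set ℕ // F ∈ 𝓕}) (x : BF 𝓕) :
    BFmul hcl (x.1 + 1, x.1 + 1, G) x ≠ x := by
  intro he
  have := congrArg Prod.fst he
  rw [mul_fst] at this
  simp only at this
  split_ifs at this <;> omega

include hne hind in
lemma moveR (G : {F : Set ℕ // F ∈ 𝓕}) (x : BF 𝓕) :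
    BFmul hcl x (x.2.1 + 1, x.2.1 + 1, G) ≠ x := by
  intro he
  have := congrArg Prod.fst he
  rw [mul_fst] at this
  simp only at this
  split_ifs at this <;> omega

include hne hind in
lemma moveLow (m : ℕ) (G : {F : Set ℕ // F ∈ 𝓕}) (x : BF 𝓕) (h1 : m ≤ x.1)
    (h2 : mF x.2.2 < mF G - (x.1 - m)) : BFmul hcl (m, m, G) x ≠ x := by
  intro he
  have := congrArg (fun z : BF 𝓕 => mF z.2.2) he
  simp only [mul_mF hcl hne hind] at this
  split_ifs at this <;> omega

include hne hind in
lemma isolated (τ : TopologicalSpace (BF0 𝓕)) (hT2 : @T2Space _ τ)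
    (hsh : ∀ a : BF0 𝓕, @Continuous _ _ τ τ (fun x => BF0mul hcl a x) ∧
      @Continuous _ _ τ τ (fun x => BF0mul hcl x a)) (x : BF 𝓕) :
    @IsOpen _ τ {some x} := by
  letI := τ
  haveI := hT2
  by_contra hop
  obtain ⟨i, j, A⟩ := x
  set p := mF A with hp
  set a : BF0 𝓕 := some (i, j, A) with ha
  have hKne : (𝓝 a ⊓ 𝓟 {a}ᶜ).NeBot := by
    rcases eq_or_neBot (𝓝 a ⊓ 𝓟 {a}ᶜ) with h | h
    · exfalso
      apply hop
      have hmem : {a} ∈ 𝓝 a := by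
        have := Filter.inf_principal_eq_bot.mp h
        simpa using this
      exact isOpen_iff_mem_nhds.2 (by rintro y rfl; exact hmem)
    · exact h
  set K0 := 𝓝 a ⊓ 𝓟 {a}ᶜ with hK0
  have hK0le : K0 ≤ 𝓝 a := inf_le_left
  have hK0mem : {a}ᶜ ∈ K0 := Filter.mem_inf_of_right (Filter.mem_principal_self _)
  -- first split
  have hcov : {a}ᶜ ⊆ ({none} : Set (BF0 𝓕)) ∪
      ((liftS fun y => mF y.2.2 < p) ∪ liftS fun y => p ≤ mF y.2.2 ∧ y ≠ (i, j, A)) := by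
    rintro z hz
    match z with
    | none => exact Or.inl rfl
    | some y =>
      right
      have hy : y ≠ (i, j, A) := by
        intro h; apply hz; rw [h]; rfl
      rcases lt_or_ge (mF y.2.2) p with h | h
      · exact Or.inl ⟨y, rfl, h⟩
      · exact Or.inr ⟨y, rfl, h, hy⟩
  rcases freq_or hKne hK0mem hcov with hb | hb
  · -- none frequent
    exact finiteContra hb (le_trans inf_le_left hK0le)
      (Filter.mem_inf_of_right (Filter.mem_principal_self _))
      (Set.finite_singleton _) (by simp [ha])
  rcases freq_or hb (Filter.mem_inf_of_right (Filter.mem_principal_self _))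
      (Set.union_subset_union (le_refl _) (le_refl _)) with hb2 | hb2
  · -- D_low : mF < p
    set K1 := (K0 ⊓ 𝓟 _) ⊓ 𝓟 (liftS fun y : BF 𝓕 => mF y.2.2 < p) with hK1
    have hK1ne : K1.NeBot := hb2
    have hK1le : K1 ≤ 𝓝 a := le_trans inf_le_left (le_trans inf_le_left hK0le)
    have hK1mem : (liftS fun y : BF 𝓕 => mF y.2.2 < p) ∈ K1 :=
      Filter.mem_inf_of_right (Filter.mem_principal_self _)
    -- split by value r = mF
    obtain ⟨r, hrT, hrne⟩ := freq_index hK1ne (Finset.range p)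
      (fun r => liftS fun y : BF 𝓕 => mF y.2.2 = r) hK1mem
      (by rintro z ⟨y, rfl, hy⟩
          exact Set.mem_biUnion (Finset.mem_range.mpr hy) ⟨y, rfl, rfl⟩)
    rw [Finset.mem_range] at hrT
    set K2 := K1 ⊓ 𝓟 (liftS fun y : BF 𝓕 => mF y.2.2 = r) with hK2
    have hK2le : K2 ≤ 𝓝 a := le_trans inf_le_left hK1le
    have hK2mem : (liftS fun y : BF 𝓕 => mF y.2.2 = r) ∈ K2 :=
      Filter.mem_inf_of_right (Filter.mem_principal_self _)
    obtain ⟨z0, y0, rfl, hy0⟩ := Filter.nonempty_of_mem (hf := hrne) hK2mem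
    set G0 := y0.2.2 with hG0
    -- split into three
    have hcov2 : (liftS fun y : BF 𝓕 => mF y.2.2 = r) ⊆
        (liftS fun y : BF 𝓕 => i < y.1 ∧ mF y.2.2 = r) ∪
        ((liftS fun y : BF 𝓕 => y.1 ≤ i ∧ j < y.2.1 ∧ mF y.2.2 = r) ∪
         (liftS fun y : BF 𝓕 => y.1 ≤ i ∧ y.2.1 ≤ j ∧ mF y.2.2 = r)) := by
      rintro z ⟨y, rfl, hy⟩
      rcases lt_or_ge i y.1 with h | h
      · exact Or.inl ⟨y, rfl, h, hy⟩
      rcases lt_or_ge j y.2.1 with h' | h'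
      · exact Or.inr (Or.inl ⟨y, rfl, h, h', hy⟩)
      · exact Or.inr (Or.inr ⟨y, rfl, h, h', hy⟩)
    rcases freq_or hrne hK2mem hcov2 with hc | hc
    · refine regionContra hc (le_trans inf_le_left hK2le)
        (Filter.mem_inf_of_right (Filter.mem_principal_self _))
        (hsh (some (i + 1, i + 1, G0))).1 ?_ ?_
      · rintro z ⟨y, rfl, hy1, hy2⟩
        exact congrArg some (left_id hcl hne hind _ _ _ (by omega) (by omega))
      · intro he
        exact moveL hcl hne hind G0 (i, j, A)
          (Option.some_injective _ he)
    rcases freq_or hc (Filter.mem_inf_of_right (Filter.mem_principal_self _))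
        (Set.union_subset_union (le_refl _) (le_refl _)) with hd | hd
    · refine regionContra hd (le_trans inf_le_left (le_trans inf_le_left hK2le))
        (Filter.mem_inf_of_right (Filter.mem_principal_self _))
        (hsh (some (j + 1, j + 1, G0))).2 ?_ ?_
      · rintro z ⟨y, rfl, hy1, hy2, hy3⟩
        exact congrArg some (right_id hcl hne hind _ _ _ (by omega) (by omega))
      · intro he
        exact moveR hcl hne hind G0 (i, j, A)
          (Option.some_injective _ he)
    · refine finiteContra hd (le_trans inf_le_left (le_trans inf_le_left hK2le))
        (Filter.mem_inf_of_right (Filter.mem_principal_self _)) ?_ ?_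
      · apply liftS_finite
        apply Set.Finite.subset (box_finite hne hind (i + j + r))
        rintro y ⟨h1, h2, h3⟩
        exact ⟨by omega, by omega, by omega⟩
      · rintro ⟨y, hy, h1, h2, h3⟩
        rw [ha] at hy
        have : y = (i, j, A) := (Option.some_injective _ hy).symm
        subst this
        simp only at h3
        omega
  · -- D_high : p ≤ mF, y ≠ (i,j,A)
    set Q := liftS fun y : BF 𝓕 => p ≤ mF y.2.2 ∧ y ≠ (i, j, A) with hQdef
    set K1 := (K0 ⊓ 𝓟 _) ⊓ 𝓟 Q with hK1
    have hK1ne : K1.NeBot := hb2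
    have hK1le : K1 ≤ 𝓝 a := le_trans inf_le_left (le_trans inf_le_left hK0le)
    have hK1mem : Q ∈ K1 := Filter.mem_inf_of_right (Filter.mem_principal_self _)
    have hcov2 : Q ⊆
        (liftS fun y : BF 𝓕 => i < y.1 ∧ p ≤ mF y.2.2) ∪
        ((liftS fun y : BF 𝓕 => y.1 ≤ i ∧ j < y.2.1 ∧ p ≤ mF y.2.2) ∪
         ((liftS fun y : BF 𝓕 => y.1 ≤ i ∧ y.2.1 ≤ j ∧ p ≤ mF y.2.2 ∧
            mF y.2.2 ≤ p + (i - y.1) ∧ y ≠ (i, j, A)) ∪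
          (liftS fun y : BF 𝓕 => y.1 ≤ i ∧ y.2.1 ≤ j ∧ p + (i - y.1) < mF y.2.2))) := by
      rintro z ⟨y, rfl, hy1, hy2⟩
      rcases lt_or_ge i y.1 with h | h
      · exact Or.inl ⟨y, rfl, h, hy1⟩
      rcases lt_or_ge j y.2.1 with h' | h'
      · exact Or.inr (Or.inl ⟨y, rfl, h, h', hy1⟩)
      rcases lt_or_ge (p + (i - y.1)) (mF y.2.2) with h'' | h''
      · exact Or.inr (Or.inr (Or.inr ⟨y, rfl, h, h', h''⟩))
      · exact Or.inr (Or.inr (Or.inl ⟨y, rfl, h, h', hy1, h'', hy2⟩))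
    rcases freq_or hK1ne hK1mem hcov2 with hc | hc
    · refine regionContra hc (le_trans inf_le_left hK1le)
        (Filter.mem_inf_of_right (Filter.mem_principal_self _))
        (hsh (some (i + 1, i + 1, A))).1 ?_ ?_
      · rintro z ⟨y, rfl, hy1, hy2⟩
        exact congrArg some (left_id hcl hne hind _ _ _ (by omega) (by omega))
      · intro he
        exact moveL hcl hne hind A (i, j, A) (Option.some_injective _ he)
    rcases freq_or hc (Filter.mem_inf_of_right (Filter.mem_principal_self _))
        (Set.union_subset_union (le_refl _) (le_refl _)) with hd | hd
    · refine regionContra hd (le_trans inf_le_left (le_trans inf_le_left hK1le))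
        (Filter.mem_inf_of_right (Filter.mem_principal_self _))
        (hsh (some (j + 1, j + 1, A))).2 ?_ ?_
      · rintro z ⟨y, rfl, hy1, hy2, hy3⟩
        exact congrArg some (right_id hcl hne hind _ _ _ (by omega) (by omega))
      · intro he
        exact moveR hcl hne hind A (i, j, A) (Option.some_injective _ he)
    rcases freq_or hd (Filter.mem_inf_of_right (Filter.mem_principal_self _))
        (Set.union_subset_union (le_refl _) (le_refl _)) with he | he
    · -- finite middle region
      refine finiteContra he
        (le_trans inf_le_left (le_trans inf_le_left (le_trans inf_le_left hK1le)))
        (Filter.mem_inf_of_right (Filter.mem_principal_self _)) ?_ ?_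
      · apply liftS_finite
        apply Set.Finite.subset (box_finite hne hind (i + j + p + i))
        rintro y ⟨h1, h2, h3, h4, h5⟩
        exact ⟨by omega, by omega, by omega⟩
      · rintro ⟨y, hy, h1, h2, h3, h4, h5⟩
        rw [ha] at hy
        exact h5 (Option.some_injective _ hy).symm
    · -- B4: split by u0
      set K4 := ((K1 ⊓ 𝓟 _) ⊓ 𝓟 _) ⊓ 𝓟 (liftS fun y : BF 𝓕 =>
        y.1 ≤ i ∧ y.2.1 ≤ j ∧ p + (i - y.1) < mF y.2.2) with hK4
      have hK4ne : K4.NeBot := he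
      have hK4le : K4 ≤ 𝓝 a :=
        le_trans inf_le_left (le_trans inf_le_left (le_trans inf_le_left hK1le))
      have hK4mem : (liftS fun y : BF 𝓕 =>
          y.1 ≤ i ∧ y.2.1 ≤ j ∧ p + (i - y.1) < mF y.2.2) ∈ K4 :=
        Filter.mem_inf_of_right (Filter.mem_principal_self _)
      obtain ⟨u0, hu0T, hu0ne⟩ := freq_index hK4ne (Finset.range (i + 1))
        (fun u0 => liftS fun y : BF 𝓕 =>
          y.1 = u0 ∧ y.2.1 ≤ j ∧ p + (i - u0) < mF y.2.2) hK4mem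
        (by rintro z ⟨y, rfl, hy1, hy2, hy3⟩
            exact Set.mem_biUnion (Finset.mem_range.mpr (by omega))
              ⟨y, rfl, rfl, hy2, hy3⟩)
      rw [Finset.mem_range] at hu0T
      have hu0i : u0 ≤ i := by omega
      set K5 := K4 ⊓ 𝓟 (liftS fun y : BF 𝓕 =>
        y.1 = u0 ∧ y.2.1 ≤ j ∧ p + (i - u0) < mF y.2.2) with hK5
      have hK5le : K5 ≤ 𝓝 a := le_trans inf_le_left hK4le
      have hK5mem : (liftS fun y : BF 𝓕 =>
          y.1 = u0 ∧ y.2.1 ≤ j ∧ p + (i - u0) < mF y.2.2) ∈ K5 :=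
        Filter.mem_inf_of_right (Filter.mem_principal_self _)
      obtain ⟨z0, y0, rfl, hy01, hy02, hy03⟩ :=
        Filter.nonempty_of_mem (hf := hu0ne) hK5mem
      set r0 := mF y0.2.2 with hr0
      set G0 := y0.2.2 with hG0
      have hcov5 : (liftS fun y : BF 𝓕 =>
          y.1 = u0 ∧ y.2.1 ≤ j ∧ p + (i - u0) < mF y.2.2) ⊆
          (liftS fun y : BF 𝓕 => y.1 = u0 ∧ r0 ≤ mF y.2.2) ∪
          (liftS fun y : BF 𝓕 => y.1 = u0 ∧ y.2.1 ≤ j ∧ p + (i - u0) < mF y.2.2 ∧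
            mF y.2.2 < r0) := by
        rintro z ⟨y, rfl, h1, h2, h3⟩
        rcases lt_or_ge (mF y.2.2) r0 with h | h
        · exact Or.inr ⟨y, rfl, h1, h2, h3, h⟩
        · exact Or.inl ⟨y, rfl, h1, h⟩
      rcases freq_or hu0ne hK5mem hcov5 with hf | hf
      · refine regionContra hf (le_trans inf_le_left hK5le)
          (Filter.mem_inf_of_right (Filter.mem_principal_self _))
          (hsh (some (u0, u0, G0))).1 ?_ ?_
        · rintro z ⟨y, rfl, hy1, hy2⟩
          exact congrArg some (left_id hcl hne hind _ _ _ (by omega) (by omega))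
        · intro heq
          exact moveLow hcl hne hind u0 G0 (i, j, A) hu0i (by simp only; omega)
            (Option.some_injective _ heq)
      · refine finiteContra hf (le_trans inf_le_left hK5le)
          (Filter.mem_inf_of_right (Filter.mem_principal_self _)) ?_ ?_
        · apply liftS_finite
          apply Set.Finite.subset (box_finite hne hind (u0 + j + r0))
          rintro y ⟨h1, h2, h3, h4⟩
          exact ⟨by omega, by omega, by omega⟩
        · rintro ⟨y, hy, h1, h2, h3, h4⟩
          rw [ha] at hy
          have : y = (i, j, A) := (Option.some_injective _ hy).symm
          subst this
          simp only at h1 h3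
          omega

end Iso

section Char
variable {𝓕 : Set (Set ℕ)} (hcl : OmegaClosed 𝓕)
  (hne : ∀ F ∈ 𝓕, F.Nonempty) (hind : ∀ F ∈ 𝓕, InductiveSet F)

include hne hind in
lemma nhds_none_char (τ : TopologicalSpace (BF0 𝓕)) (hC : @CompactSpace _ τ)
    (hT2 : @T2Space _ τ)
    (hsh : ∀ a : BF0 𝓕, @Continuous _ _ τ τ (fun x => BF0mul hcl a x) ∧
      @Continuous _ _ τ τ (fun x => BF0mul hcl x a)) :
    ∀ U : Set (BF0 𝓕), U ∈ @nhds _ τ none ↔ none ∈ U ∧ Uᶜ.Finite := by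
  letI := τ
  haveI := hC
  haveI := hT2
  intro U
  constructor
  · intro hU
    refine ⟨mem_of_mem_nhds hU, ?_⟩
    obtain ⟨V, hVU, hVopen, hVmem⟩ := mem_nhds_iff.mp hU
    have hK : IsCompact Vᶜ := hVopen.isClosed_compl.isCompact
    have hcover : Vᶜ ⊆ ⋃ y : BF 𝓕, {some y} := by
      intro z hz
      match z with
      | none => exact absurd hVmem hz
      | some y => exact Set.mem_iUnion.mpr ⟨y, rfl⟩
    obtain ⟨t, ht⟩ := hK.elim_finite_subcover (fun y : BF 𝓕 => {some y})
      (fun y => isolated hcl hne hind τ hT2 hsh y) hcover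
    have hVc : Vᶜ.Finite := Set.Finite.subset
      (Set.Finite.biUnion t.finite_toSet (fun _ _ => Set.finite_singleton _)) ht
    exact hVc.subset (Set.compl_subset_compl.mpr hVU)
  · rintro ⟨h1, h2⟩
    have hop : IsOpen U := by
      have := h2.isClosed.isOpen_compl
      rwa [compl_compl] at this
    exact hop.mem_nhds h1

include hne hind in
lemma nhds_some_char (τ : TopologicalSpace (BF0 𝓕)) (hT2 : @T2Space _ τ)
    (hsh : ∀ a : BF0 𝓕, @Continuous _ _ τ τ (fun x => BF0mul hcl a x) ∧
      @Continuous _ _ τ τ (fun x => BF0mul hcl x a)) (x : BF 𝓕) :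
    @nhds _ τ (some x) = pure (some x) := by
  letI := τ
  refine le_antisymm (Filter.le_pure_iff.mpr ?_) (pure_le_nhds _)
  exact (isolated hcl hne hind τ hT2 hsh x).mem_nhds rfl

def tau0 (𝓕 : Set (Set ℕ)) : TopologicalSpace (BF0 𝓕) where
  IsOpen U := none ∈ U → Uᶜ.Finite
  isOpen_univ := by simp
  isOpen_inter := by
    intro U V hU hV h
    rw [Set.compl_inter]
    exact Set.Finite.union (hU h.1) (hV h.2)
  isOpen_sUnion := by
    intro S hS h
    obtain ⟨U, hU, hnU⟩ := h
    exact Set.Finite.subset (hS U hU hnU)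
      (Set.compl_subset_compl.mpr (Set.subset_sUnion_of_mem hU))

lemma tau0_isOpen {𝓕 : Set (Set ℕ)} (U : Set (BF0 𝓕)) :
    @IsOpen _ (tau0 𝓕) U ↔ (none ∈ U → Uᶜ.Finite) := Iff.rfl

lemma tau0_compact (𝓕 : Set (Set ℕ)) : @CompactSpace _ (tau0 𝓕) := by
  letI := tau0 𝓕
  constructor
  apply isCompact_of_finite_subcover
  intro ι U hUo hcov
  obtain ⟨i0, hi0⟩ := Set.mem_iUnion.mp (hcov (Set.mem_univ none))
  have hfin : (U i0)ᶜ.Finite := hUo i0 hi0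
  classical
  refine ⟨insert i0 (hfin.toFinset.image fun z =>
    Classical.choose (Set.mem_iUnion.mp (hcov (Set.mem_univ z)))), ?_⟩
  intro z _
  by_cases hz : z ∈ U i0
  · exact Set.mem_biUnion (Finset.mem_insert_self _ _) hz
  · refine Set.mem_biUnion (Finset.mem_insert_of_mem
      (Finset.mem_image.mpr ⟨z, hfin.mem_toFinset.mpr hz, rfl⟩)) ?_
    exact Classical.choose_spec (Set.mem_iUnion.mp (hcov (Set.mem_univ z)))

lemma tau0_t2 (𝓕 : Set (Set ℕ)) : @T2Space _ (tau0 𝓕) := by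
  letI := tau0 𝓕
  constructor
  intro x y hxy
  match x, y with
  | none, none => exact absurd rfl hxy
  | none, some b =>
    refine ⟨{some b}ᶜ, {some b}, ?_, ?_, ?_, rfl, disjoint_compl_left⟩
    · intro _
      rw [compl_compl]
      exact Set.finite_singleton _
    · intro h
      simp at h
    · simp
  | some a, none =>
    refine ⟨{some a}, {some a}ᶜ, ?_, ?_, rfl, ?_, disjoint_compl_right⟩
    · intro h
      simp at h
    · intro _
      rw [compl_compl]
      exact Set.finite_singleton _
    · simp
  | some a, some b =>
    refine ⟨{some a}, {some b}, ?_, ?_, rfl, rfl, ?_⟩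
    · intro h; simp at h
    · intro h; simp at h
    · simp only [Set.disjoint_singleton]
      exact hxy

include hne hind in
lemma fiber0_left (a : BF0 𝓕) (c : BF 𝓕) :
    {z : BF0 𝓕 | BF0mul hcl a z = some c}.Finite := by
  match a with
  | none =>
    convert Set.finite_empty
    ext z
    simp only [Set.mem_setOf_eq, Set.mem_empty_iff_false, iff_false]
    match z with
    | none => simp [BF0mul]
    | some b => simp [BF0mul]
  | some a' =>
    apply Set.Finite.subset ((fiber_left hcl hne hind a' c).image some)
    intro z hz
    match z with
    | none => simp [BF0mul] at hz
    | some b =>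
      have hz' : some (BFmul hcl a' b) = some c := hz
      exact ⟨b, Option.some_injective _ hz', rfl⟩

include hne hind in
lemma fiber0_right (a : BF0 𝓕) (c : BF 𝓕) :
    {z : BF0 𝓕 | BF0mul hcl z a = some c}.Finite := by
  match a with
  | none =>
    convert Set.finite_empty
    ext z
    simp only [Set.mem_setOf_eq, Set.mem_empty_iff_false, iff_false]
    match z with
    | none => simp [BF0mul]
    | some b => simp [BF0mul]
  | some a' =>
    apply Set.Finite.subset ((fiber_right hcl hne hind a' c).image some)
    intro z hz
    match z with
    | none => simp [BF0mul] at hz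
    | some b =>
      have hz' : some (BFmul hcl b a') = some c := hz
      exact ⟨b, Option.some_injective _ hz', rfl⟩

include hne hind in
lemma tau0_shift : ∀ a : BF0 𝓕,
    @Continuous _ _ (tau0 𝓕) (tau0 𝓕) (fun x => BF0mul hcl a x) ∧
    @Continuous _ _ (tau0 𝓕) (tau0 𝓕) (fun x => BF0mul hcl x a) := by
  letI := tau0 𝓕
  intro a
  constructor
  · rw [continuous_def]
    intro U hU hn
    have fnone : BF0mul hcl a none = none := by
      match a with
      | none => rfl
      | some a' => rfl
    have hnU : none ∈ U := by
      have : BF0mul hcl a none ∈ U := hn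
      rwa [fnone] at this
    have hUc : Uᶜ.Finite := hU hnU
    have : ((fun x => BF0mul hcl a x) ⁻¹' U)ᶜ ⊆
        ⋃ c ∈ Uᶜ, {z : BF0 𝓕 | BF0mul hcl a z = c} := by
      intro z hz
      exact Set.mem_biUnion hz rfl
    refine Set.Finite.subset (Set.Finite.biUnion hUc fun c hc => ?_) this
    match c with
    | none => exact absurd hnU hc
    | some c' => exact fiber0_left hcl hne hind a c'
  · rw [continuous_def]
    intro U hU hn
    have fnone : BF0mul hcl none a = none := by
      match a with
      | none => rfl
      | some a' => rfl
    have hnU : none ∈ U := by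
      have : BF0mul hcl none a ∈ U := hn
      rwa [fnone] at this
    have hUc : Uᶜ.Finite := hU hnU
    have : ((fun x => BF0mul hcl x a) ⁻¹' U)ᶜ ⊆
        ⋃ c ∈ Uᶜ, {z : BF0 𝓕 | BF0mul hcl z a = c} := by
      intro z hz
      exact Set.mem_biUnion hz rfl
    refine Set.Finite.subset (Set.Finite.biUnion hUc fun c hc => ?_) this
    match c with
    | none => exact absurd hnU hc
    | some c' => exact fiber0_right hcl hne hind a c'

end Char


/-- Remark 3.8: on `S = B_ω^𝓕 ∪ {0}` (for an ω-closed family `𝓕` of nonempty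
inductive subsets of `ω`) there is exactly one compact Hausdorff shift-continuous
topology, namely the topology in which every element of `B_ω^𝓕` is isolated and the
neighbourhoods of `0` are exactly the sets `U ∋ 0` with finite complement. -/
theorem statement11 (𝓕 : Set (Set ℕ)) (hcl : OmegaClosed 𝓕)
    (hne : ∀ F ∈ 𝓕, F.Nonempty) (hind : ∀ F ∈ 𝓕, InductiveSet F) :
    (∃! τ : TopologicalSpace (BF0 𝓕),
      @CompactSpace _ τ ∧ @T2Space _ τ ∧
        ∀ a : BF0 𝓕, @Continuous _ _ τ τ (fun x => BF0mul hcl a x) ∧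
          @Continuous _ _ τ τ (fun x => BF0mul hcl x a)) ∧
    ∀ τ : TopologicalSpace (BF0 𝓕),
      (@CompactSpace _ τ ∧ @T2Space _ τ ∧
        ∀ a : BF0 𝓕, @Continuous _ _ τ τ (fun x => BF0mul hcl a x) ∧
          @Continuous _ _ τ τ (fun x => BF0mul hcl x a)) →
      (∀ x : BF 𝓕, @IsOpen _ τ {some x}) ∧
      (∀ U : Set (BF0 𝓕), U ∈ @nhds _ τ none ↔ (none ∈ U ∧ Uᶜ.Finite)) := by
  constructor
  · refine ⟨tau0 𝓕, ⟨tau0_compact 𝓕, tau0_t2 𝓕, tau0_shift hcl hne hind⟩, ?_⟩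
    rintro τ' ⟨hC', hT2', hsh'⟩
    refine TopologicalSpace.ext_nhds fun z => ?_
    match z with
    | none =>
      apply Filter.ext
      intro U
      rw [show (U ∈ @nhds _ τ' none) ↔ _ from
            nhds_none_char hcl hne hind τ' hC' hT2' hsh' U,
          show (U ∈ @nhds _ (tau0 𝓕) none) ↔ _ from
            nhds_none_char hcl hne hind (tau0 𝓕) (tau0_compact 𝓕) (tau0_t2 𝓕)
              (tau0_shift hcl hne hind) U]
    | some y =>
      rw [show @nhds _ τ' (some y) = _ from nhds_some_char hcl hne hind τ' hT2' hsh' y,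
          show @nhds _ (tau0 𝓕) (some y) = _ from
            nhds_some_char hcl hne hind (tau0 𝓕) (tau0_t2 𝓕) (tau0_shift hcl hne hind) y]
  · rintro τ ⟨hC, hT2, hsh⟩
    exact ⟨isolated hcl hne hind τ hT2 hsh, nhds_none_char hcl hne hind τ hC hT2 hsh⟩
end

section
/- Let 𝓕 be an ω-closed family of nonempty inductive subsets of ω and let S = B_ω^𝓕 ∪ {0} be B_ω^𝓕 with an adjoined zero. Then every Hausdorff locally compact shift-continuous topology on S is either compact or discrete. -/
namespace BFW
open Set Filter Topology

lemma eq_Ici_of_inductive {F : Set ℕ} (hne : F.Nonempty) (hind : InductiveSet F) :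
    F = Set.Ici (sInf F) := by
  ext x
  constructor
  · intro hx; exact Nat.sInf_le hx
  · intro hx
    have h0 : sInf F ∈ F := Nat.sInf_mem hne
    have key : ∀ d, sInf F + d ∈ F := by
      intro d
      induction d with
      | zero => simpa using h0
      | succ n ih => exact hind _ ih
    obtain ⟨d, rfl⟩ := Nat.exists_eq_add_of_le hx
    exact key d

lemma wShift_Ici (n k : ℕ) : wShift n (Set.Ici k) = Set.Ici (k - n) := by
  ext x
  simp only [wShift, Set.mem_setOf_eq, Set.mem_Ici]
  omega

variable {𝓕 : Set (Set ℕ)}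

def el (𝓕 : Set (Set ℕ)) (p q k : ℕ) (hk : Set.Ici k ∈ 𝓕) : BF 𝓕 := (p, q, ⟨Set.Ici k, hk⟩)

lemma Ici_max_mem (hcl : OmegaClosed 𝓕) {k₁ k₂ : ℕ} (h₁ : Set.Ici k₁ ∈ 𝓕)
    (h₂ : Set.Ici k₂ ∈ 𝓕) (t : ℕ) : Set.Ici (max (k₁ - t) k₂) ∈ 𝓕 := by
  have h := hcl t _ h₂ _ h₁
  rwa [wShift_Ici, Set.Ici_inter_Ici, sup_comm] at h

lemma BFmul_el_le (hcl : OmegaClosed 𝓕) {p₁ q₁ k₁ p₂ q₂ k₂ : ℕ} (h₁ : Set.Ici k₁ ∈ 𝓕)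
    (h₂ : Set.Ici k₂ ∈ 𝓕) (h : q₁ ≤ p₂) :
    BFmul hcl (el 𝓕 p₁ q₁ k₁ h₁) (el 𝓕 p₂ q₂ k₂ h₂) =
      el 𝓕 (p₁ + (p₂ - q₁)) q₂ (max (k₁ - (p₂ - q₁)) k₂) (Ici_max_mem hcl h₁ h₂ _) := by
  unfold BFmul el
  simp only [if_pos h]
  refine Prod.ext rfl (Prod.ext rfl (Subtype.ext ?_))
  simp only [wShift_Ici, Set.Ici_inter_Ici]

lemma BFmul_el_ge (hcl : OmegaClosed 𝓕) {p₁ q₁ k₁ p₂ q₂ k₂ : ℕ} (h₁ : Set.Ici k₁ ∈ 𝓕)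
    (h₂ : Set.Ici k₂ ∈ 𝓕) (h : p₂ ≤ q₁) :
    BFmul hcl (el 𝓕 p₁ q₁ k₁ h₁) (el 𝓕 p₂ q₂ k₂ h₂) =
      el 𝓕 p₁ (q₂ + (q₁ - p₂)) (max k₁ (k₂ - (q₁ - p₂)))
        (by rw [max_comm]; exact Ici_max_mem hcl h₂ h₁ _) := by
  unfold BFmul el
  by_cases h' : q₁ ≤ p₂
  · have hq : q₁ = p₂ := le_antisymm h' h
    subst hq
    simp only [if_pos le_rfl]
    refine Prod.ext (by simp) (Prod.ext (by simp) (Subtype.ext ?_))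
    simp only [wShift_Ici, Set.Ici_inter_Ici]
    simp
  · simp only [if_neg h']
    refine Prod.ext rfl (Prod.ext rfl (Subtype.ext ?_))
    simp only [wShift_Ici, Set.Ici_inter_Ici]

lemma el_inj {p q k p' q' k' : ℕ} {hk : Set.Ici k ∈ 𝓕} {hk' : Set.Ici k' ∈ 𝓕} :
    el 𝓕 p q k hk = el 𝓕 p' q' k' hk' ↔ p = p' ∧ q = q' ∧ k = k' := by
  constructor
  · intro h
    unfold el at h
    have h1 := congrArg Prod.fst h
    have h2 := congrArg (fun x => x.2.1) h
    have h3 := congrArg (fun x => (x.2.2 : {F : Set ℕ // F ∈ 𝓕}).1) h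
    simp only at h1 h2 h3
    refine ⟨h1, h2, ?_⟩
    have hkk' : k' ∈ Set.Ici k := by rw [h3]; exact Set.self_mem_Ici
    have hk'k : k ∈ Set.Ici k' := by rw [← h3]; exact Set.self_mem_Ici
    exact le_antisymm (Set.mem_Ici.mp hkk') (Set.mem_Ici.mp hk'k)
  · rintro ⟨rfl, rfl, rfl⟩; rfl

lemma exists_el (hne : ∀ F ∈ 𝓕, F.Nonempty) (hind : ∀ F ∈ 𝓕, InductiveSet F)
    (x : BF 𝓕) : ∃ (p q k : ℕ) (hk : Set.Ici k ∈ 𝓕), x = el 𝓕 p q k hk := by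
  obtain ⟨p, q, F, hF⟩ := x
  have hIci : F = Set.Ici (sInf F) := eq_Ici_of_inductive (hne F hF) (hind F hF)
  exact ⟨p, q, sInf F, hIci ▸ hF, by simp [el, Subtype.ext_iff, ← hIci]⟩

end BFW

section TopUtil
open Set Filter Topology
variable {X : Type*} [TopologicalSpace X] [T2Space X]

lemma engine {L : Filter X} [L.NeBot] {b : X} (hL : L ≤ nhds b) {f g : X → X}
    (hf : Continuous f) (hg : Continuous g) (heq : ∀ᶠ x in L, f x = g x)
    (hne : f b ≠ g b) : False := by
  have h1 : Filter.Tendsto f L (nhds (f b)) := (hf.tendsto b).mono_left hL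
  have h2 : Filter.Tendsto g L (nhds (g b)) := (hg.tendsto b).mono_left hL
  have h3 : Filter.map f L = Filter.map g L := Filter.map_congr heq
  have h4 : (nhds (f b) ⊓ nhds (g b)).NeBot :=
    Filter.NeBot.mono Filter.map_neBot (le_inf h1 (h3 ▸ h2))
  exact hne (t2_iff_nhds.mp inferInstance h4)

lemma const_engine {L : Filter X} [L.NeBot] {b c : X} (hL : L ≤ nhds b)
    (hc : {c} ∈ L) : b = c := by
  by_contra hbc
  exact engine hL continuous_id continuous_const
    (by filter_upwards [hc] with x hx; exact hx) hbc

lemma compl_mem_of_finite {L : Filter X} [L.NeBot] {b : X} (hL : L ≤ nhds b)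
    {s : Set X} (hs : s.Finite) (hb : b ∉ s) : sᶜ ∈ L := by
  have h : ∀ x ∈ s, ({x} : Set X)ᶜ ∈ L := by
    intro x hx
    by_contra hmem
    have hne : (L ⊓ Filter.principal {x}).NeBot := by
      rw [Filter.neBot_iff]
      intro hbot
      exact hmem (Filter.inf_principal_eq_bot.mp hbot)
    have hL' : (L ⊓ Filter.principal {x}) ≤ nhds b := inf_le_left.trans hL
    have hbx : b = x := const_engine hL'
      (Filter.mem_inf_of_right (Filter.mem_principal_self _))
    exact hb (hbx ▸ hx)
  have h2 : sᶜ = ⋂ x ∈ s, ({x} : Set X)ᶜ := by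
    ext y
    simp only [Set.mem_compl_iff, Set.mem_iInter, Set.mem_singleton_iff]
    constructor
    · intro hy i hi hyi; exact hy (hyi ▸ hi)
    · intro hall hy; exact hall y hy rfl
  rw [h2]
  exact (Filter.biInter_mem hs).mpr h

lemma exists_neBot_of_union {L : Filter X} [L.NeBot] {ι : Type*} {s : Finset ι}
    {f : ι → Set X} (h : (⋃ a ∈ s, f a) ∈ L) :
    ∃ a ∈ s, (L ⊓ Filter.principal (f a)).NeBot := by
  by_contra hc
  push_neg at hc
  have h2 : ∀ a ∈ s, (f a)ᶜ ∈ L := by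
    intro a ha
    have h3 := hc a ha
    exact Filter.inf_principal_eq_bot.mp h3
  have h3 : (⋂ a ∈ s, (f a)ᶜ) ∈ L := (Filter.biInter_finset_mem s).mpr h2
  have h4 := Filter.inter_mem h h3
  have h5 : ((⋃ a ∈ s, f a) ∩ ⋂ a ∈ s, (f a)ᶜ) = ∅ := by
    ext y
    simp only [Set.mem_inter_iff, Set.mem_iUnion, Set.mem_iInter, Set.mem_compl_iff,
      Set.mem_empty_iff_false, iff_false, not_and]
    rintro ⟨a, ha, hya⟩ hall
    exact (hall a ha) hya
  rw [h5] at h4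
  exact (Filter.empty_notMem L) h4

lemma neBot_of_union2 {L : Filter X} [L.NeBot] {S S' : Set X} (h : S ∪ S' ∈ L) :
    (L ⊓ Filter.principal S).NeBot ∨ (L ⊓ Filter.principal S').NeBot := by
  by_contra hc
  push_neg at hc
  obtain ⟨h1, h2⟩ := hc
  have hS : Sᶜ ∈ L := Filter.inf_principal_eq_bot.mp h1
  have hS' : S'ᶜ ∈ L := Filter.inf_principal_eq_bot.mp h2
  have h4 := Filter.inter_mem h (Filter.inter_mem hS hS')
  have h5 : (S ∪ S') ∩ (Sᶜ ∩ S'ᶜ) = ∅ := by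
    ext y; simp only [Set.mem_inter_iff, Set.mem_union, Set.mem_compl_iff,
      Set.mem_empty_iff_false, iff_false, not_and]
    tauto
  rw [h5] at h4
  exact (Filter.empty_notMem L) h4

lemma neBot_punctured {a : X} (h : ¬ IsOpen ({a} : Set X)) :
    (nhdsWithin a ({a} : Set X)ᶜ).NeBot := by
  rw [Filter.neBot_iff]
  intro hbot
  rw [nhdsWithin] at hbot
  have h1 : ({a} : Set X)ᶜᶜ ∈ nhds a := Filter.inf_principal_eq_bot.mp hbot
  rw [compl_compl] at h1
  have h3 : interior ({a} : Set X) = {a} := by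
    refine Set.Subset.antisymm interior_subset ?_
    intro x hx
    rcases hx
    exact mem_interior_iff_mem_nhds.mpr h1
  exact h (h3 ▸ isOpen_interior)

lemma finite_of_compact_of_isolated {K : Set X} (hK : IsCompact K)
    (hiso : ∀ x ∈ K, IsOpen ({x} : Set X)) : K.Finite := by
  obtain ⟨t, ht⟩ := hK.elim_finite_subcover (fun x : K => ({x.1} : Set X))
    (fun x => hiso x.1 x.2) (fun x hx => Set.mem_iUnion.mpr ⟨⟨x, hx⟩, rfl⟩)
  have : K ⊆ ⋃ i ∈ t, ({(i : X)} : Set X) := ht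
  exact Set.Finite.subset (t.finite_toSet.biUnion (fun i _ => Set.finite_singleton _)) this
end TopUtil

section Engines
open Set Filter Topology
variable {𝓕 : Set (Set ℕ)} {hcl : OmegaClosed 𝓕}

def sel (hcl : OmegaClosed 𝓕) (p q k : ℕ) (hk : Set.Ici k ∈ 𝓕) : BF0 𝓕 := some (BFW.el 𝓕 p q k hk)

lemma BF0mul_some {u w : BF 𝓕} : BF0mul hcl (some u) (some w) = some (BFmul hcl u w) := rfl

lemma sel_inj {p q k p' q' k' : ℕ} {hk : Set.Ici k ∈ 𝓕} {hk' : Set.Ici k' ∈ 𝓕} :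
    sel hcl p q k hk = sel hcl p' q' k' hk' ↔ p = p' ∧ q = q' ∧ k = k' := by
  unfold sel
  rw [Option.some_inj, BFW.el_inj]

variable [TopologicalSpace (BF0 𝓕)] [T2Space (BF0 𝓕)]
variable (hsc : ∀ a : BF0 𝓕, Continuous (fun x => BF0mul hcl a x) ∧
    Continuous (fun x => BF0mul hcl x a))

section EngineProofs
variable {a₀ : ℕ} (h₀ : Set.Ici a₀ ∈ 𝓕) (hmin : ∀ r : ℕ, Set.Ici r ∈ 𝓕 → a₀ ≤ r)
variable {i j k : ℕ} (hk : Set.Ici k ∈ 𝓕)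
variable {L : Filter (BF0 𝓕)} [L.NeBot] (hL : L ≤ nhds (sel hcl i j k hk))

include hsc h₀ hmin hk hL

lemma engineA
    (hC : {x | ∃ (p q r : ℕ) (hr : Set.Ici r ∈ 𝓕), x = sel hcl p q r hr ∧ i < p} ∈ L) : False := by
  set v : BF0 𝓕 := sel hcl i (i+1) a₀ h₀ with hv
  set w : BF0 𝓕 := sel hcl (i+1) i a₀ h₀ with hw
  have hcont : Continuous (fun x => BF0mul hcl w (BF0mul hcl v x)) :=
    (hsc w).1.comp (hsc v).1
  refine engine hL hcont continuous_id ?_ ?_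
  · filter_upwards [hC] with x hx
    obtain ⟨p, q, r, hr, rfl, hp⟩ := hx
    have hra : a₀ ≤ r := hmin r hr
    have h1 : BFmul hcl (BFW.el 𝓕 i (i+1) a₀ h₀) (BFW.el 𝓕 p q r hr) =
        BFW.el 𝓕 (p-1) q r hr := by
      rw [BFW.BFmul_el_le hcl h₀ hr (by omega)]
      rw [BFW.el_inj]
      omega
    have h2 : BFmul hcl (BFW.el 𝓕 (i+1) i a₀ h₀) (BFW.el 𝓕 (p-1) q r hr) =
        BFW.el 𝓕 p q r hr := by
      rw [BFW.BFmul_el_le hcl h₀ hr (by omega)]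
      rw [BFW.el_inj]
      omega
    show BF0mul hcl w (BF0mul hcl v (sel hcl p q r hr)) = sel hcl p q r hr
    rw [hv, hw]
    unfold sel
    rw [BF0mul_some, h1, BF0mul_some, h2]
  · have hak : a₀ ≤ k := hmin k hk
    have hm1 : Set.Ici (max a₀ (k-1)) ∈ 𝓕 := by
      rw [max_comm]; exact BFW.Ici_max_mem hcl hk h₀ 1
    show BF0mul hcl w (BF0mul hcl v (sel hcl i j k hk)) ≠ sel hcl i j k hk
    have h1 : BFmul hcl (BFW.el 𝓕 i (i+1) a₀ h₀) (BFW.el 𝓕 i j k hk) =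
        BFW.el 𝓕 i (j+1) (max a₀ (k-1)) hm1 := by
      rw [BFW.BFmul_el_ge hcl h₀ hk (by omega)]
      rw [BFW.el_inj]
      omega
    have h2 : BFmul hcl (BFW.el 𝓕 (i+1) i a₀ h₀) (BFW.el 𝓕 i (j+1) (max a₀ (k-1)) hm1) =
        BFW.el 𝓕 (i+1) (j+1) (max a₀ (k-1)) hm1 := by
      rw [BFW.BFmul_el_le hcl h₀ hm1 (le_refl i)]
      rw [BFW.el_inj]
      omega
    rw [hv, hw]
    unfold sel
    rw [BF0mul_some, h1, BF0mul_some, h2]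
    intro hcontra
    rw [Option.some_inj, BFW.el_inj] at hcontra
    omega

lemma engineB
    (hC : {x | ∃ (p q r : ℕ) (hr : Set.Ici r ∈ 𝓕), x = sel hcl p q r hr ∧ j < q} ∈ L) : False := by
  set v : BF0 𝓕 := sel hcl (j+1) j a₀ h₀ with hv
  set w : BF0 𝓕 := sel hcl j (j+1) a₀ h₀ with hw
  have hcont : Continuous (fun x => BF0mul hcl (BF0mul hcl x v) w) :=
    (hsc w).2.comp (hsc v).2
  refine engine hL hcont continuous_id ?_ ?_
  · filter_upwards [hC] with x hx
    obtain ⟨p, q, r, hr, rfl, hq⟩ := hx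
    have hra : a₀ ≤ r := hmin r hr
    have h1 : BFmul hcl (BFW.el 𝓕 p q r hr) (BFW.el 𝓕 (j+1) j a₀ h₀) =
        BFW.el 𝓕 p (q-1) r hr := by
      by_cases hq1 : q ≤ j + 1
      · rw [BFW.BFmul_el_le hcl hr h₀ hq1]
        rw [BFW.el_inj]
        omega
      · rw [BFW.BFmul_el_ge hcl hr h₀ (by omega)]
        rw [BFW.el_inj]
        omega
    have h2 : BFmul hcl (BFW.el 𝓕 p (q-1) r hr) (BFW.el 𝓕 j (j+1) a₀ h₀) =
        BFW.el 𝓕 p q r hr := by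
      by_cases hq1 : q - 1 ≤ j
      · rw [BFW.BFmul_el_le hcl hr h₀ hq1]
        rw [BFW.el_inj]
        omega
      · rw [BFW.BFmul_el_ge hcl hr h₀ (by omega)]
        rw [BFW.el_inj]
        omega
    show BF0mul hcl (BF0mul hcl (sel hcl p q r hr) v) w = sel hcl p q r hr
    rw [hv, hw]
    unfold sel
    rw [BF0mul_some, h1, BF0mul_some, h2]
  · have hak : a₀ ≤ k := hmin k hk
    have hm1 : Set.Ici (max (k-1) a₀) ∈ 𝓕 := BFW.Ici_max_mem hcl hk h₀ 1
    show BF0mul hcl (BF0mul hcl (sel hcl i j k hk) v) w ≠ sel hcl i j k hk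
    have h1 : BFmul hcl (BFW.el 𝓕 i j k hk) (BFW.el 𝓕 (j+1) j a₀ h₀) =
        BFW.el 𝓕 (i+1) j (max (k-1) a₀) hm1 := by
      rw [BFW.BFmul_el_le hcl hk h₀ (by omega)]
      rw [BFW.el_inj]
      omega
    have h2 : BFmul hcl (BFW.el 𝓕 (i+1) j (max (k-1) a₀) hm1) (BFW.el 𝓕 j (j+1) a₀ h₀) =
        BFW.el 𝓕 (i+1) (j+1) (max (k-1) a₀) hm1 := by
      rw [BFW.BFmul_el_le hcl hm1 h₀ (le_refl j)]
      rw [BFW.el_inj]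
      omega
    rw [hv, hw]
    unfold sel
    rw [BF0mul_some, h1, BF0mul_some, h2]
    intro hcontra
    rw [Option.some_inj, BFW.el_inj] at hcontra
    omega

lemma engineF {p₀ q₀ : ℕ} (hp₀ : p₀ ≤ i) (hq₀ : q₀ ≤ j) {c₂ : ℕ} (hc₂ : Set.Ici c₂ ∈ 𝓕)
    (hbig : k + j < c₂)
    (hC : {x | ∃ (r : ℕ) (hr : Set.Ici r ∈ 𝓕), x = sel hcl p₀ q₀ r hr ∧ c₂ ≤ r} ∈ L) : False := by
  have hak : a₀ ≤ k := hmin k hk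
  set v : BF0 𝓕 := sel hcl q₀ q₀ a₀ h₀ with hv
  set w : BF0 𝓕 := sel hcl q₀ q₀ c₂ hc₂ with hw
  refine engine hL (hsc v).2 (hsc w).2 ?_ ?_
  · filter_upwards [hC] with x hx
    obtain ⟨r, hr, rfl, hcr⟩ := hx
    have hra : a₀ ≤ r := hmin r hr
    have h1 : BFmul hcl (BFW.el 𝓕 p₀ q₀ r hr) (BFW.el 𝓕 q₀ q₀ a₀ h₀) =
        BFW.el 𝓕 p₀ q₀ r hr := by
      rw [BFW.BFmul_el_le hcl hr h₀ (le_refl q₀)]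
      rw [BFW.el_inj]
      omega
    have h2 : BFmul hcl (BFW.el 𝓕 p₀ q₀ r hr) (BFW.el 𝓕 q₀ q₀ c₂ hc₂) =
        BFW.el 𝓕 p₀ q₀ r hr := by
      rw [BFW.BFmul_el_le hcl hr hc₂ (le_refl q₀)]
      rw [BFW.el_inj]
      omega
    show BF0mul hcl (sel hcl p₀ q₀ r hr) v = BF0mul hcl (sel hcl p₀ q₀ r hr) w
    rw [hv, hw]
    unfold sel
    rw [BF0mul_some, BF0mul_some, h1, h2]
  · show BF0mul hcl (sel hcl i j k hk) v ≠ BF0mul hcl (sel hcl i j k hk) w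
    have h1 : BFmul hcl (BFW.el 𝓕 i j k hk) (BFW.el 𝓕 q₀ q₀ a₀ h₀) =
        BFW.el 𝓕 i j k hk := by
      by_cases hj1 : j ≤ q₀
      · rw [BFW.BFmul_el_le hcl hk h₀ hj1]
        rw [BFW.el_inj]
        omega
      · rw [BFW.BFmul_el_ge hcl hk h₀ (by omega)]
        rw [BFW.el_inj]
        omega
    have hm2 : Set.Ici (max k (c₂ - (j - q₀))) ∈ 𝓕 := by
      rw [max_comm]; exact BFW.Ici_max_mem hcl hc₂ hk (j - q₀)
    have h2 : BFmul hcl (BFW.el 𝓕 i j k hk) (BFW.el 𝓕 q₀ q₀ c₂ hc₂) =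
        BFW.el 𝓕 i j (max k (c₂ - (j - q₀))) hm2 := by
      by_cases hj1 : j ≤ q₀
      · rw [BFW.BFmul_el_le hcl hk hc₂ hj1]
        rw [BFW.el_inj]
        omega
      · rw [BFW.BFmul_el_ge hcl hk hc₂ (by omega)]
        rw [BFW.el_inj]
        omega
    rw [hv, hw]
    unfold sel
    rw [BF0mul_some, BF0mul_some, h1, h2]
    intro hcontra
    rw [Option.some_inj, BFW.el_inj] at hcontra
    omega
end EngineProofs
end Engines

section Isolated
open Set Filter Topology
variable {𝓕 : Set (Set ℕ)} {hcl : OmegaClosed 𝓕}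
variable [TopologicalSpace (BF0 𝓕)] [T2Space (BF0 𝓕)]

lemma isolated_s12 (hsc : ∀ a : BF0 𝓕, Continuous (fun x => BF0mul hcl a x) ∧
      Continuous (fun x => BF0mul hcl x a))
    (hne : ∀ F ∈ 𝓕, F.Nonempty) (hind : ∀ F ∈ 𝓕, InductiveSet F)
    (v : BF 𝓕) : IsOpen ({some v} : Set (BF0 𝓕)) := by
  by_contra hop
  obtain ⟨i, j, k, hk, rfl⟩ := BFW.exists_el hne hind v
  have hAne : {m : ℕ | Set.Ici m ∈ 𝓕}.Nonempty := ⟨k, hk⟩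
  set a₀ := sInf {m : ℕ | Set.Ici m ∈ 𝓕} with ha₀
  have h₀ : Set.Ici a₀ ∈ 𝓕 := Nat.sInf_mem hAne
  have hmin : ∀ r : ℕ, Set.Ici r ∈ 𝓕 → a₀ ≤ r := fun r hr => Nat.sInf_le hr
  set a : BF0 𝓕 := sel hcl i j k hk with haa
  have hop' : ¬ IsOpen ({a} : Set (BF0 𝓕)) := hop
  have hL0 : (nhdsWithin a ({a}ᶜ)).NeBot := neBot_punctured hop'
  set L₀ := nhdsWithin a ({a}ᶜ) with hL₀def
  have hLle : L₀ ≤ nhds a := nhdsWithin_le_nhds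
  have hnn : ({(none : BF0 𝓕)}ᶜ) ∈ L₀ :=
    compl_mem_of_finite hLle (Set.finite_singleton _) (by simp [haa, sel])
  have hne_a : ({a}ᶜ) ∈ L₀ := self_mem_nhdsWithin
  set SA : Set (BF0 𝓕) :=
    {x | ∃ (p q r : ℕ) (hr : Set.Ici r ∈ 𝓕), x = sel hcl p q r hr ∧ i < p} with hSA
  set SB : Set (BF0 𝓕) :=
    {x | ∃ (p q r : ℕ) (hr : Set.Ici r ∈ 𝓕), x = sel hcl p q r hr ∧ j < q} with hSB
  set SF : ℕ → ℕ → Set (BF0 𝓕) := fun p₀ q₀ =>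
    {x | ∃ (r : ℕ) (hr : Set.Ici r ∈ 𝓕), x = sel hcl p₀ q₀ r hr ∧ x ≠ a} with hSF
  set s : Finset (ℕ × ℕ) := Finset.range (i+1) ×ˢ Finset.range (j+1) with hs
  set SU : Set (BF0 𝓕) := ⋃ pq ∈ s, SF pq.1 pq.2 with hSU
  have hcov : SA ∪ (SB ∪ SU) ∈ L₀ := by
    refine Filter.mem_of_superset (Filter.inter_mem hne_a hnn) ?_
    rintro x ⟨hxa, hxn⟩
    match x with
    | none => exact absurd rfl hxn
    | some y =>
      obtain ⟨p, q, r, hr, rfl⟩ := BFW.exists_el hne hind y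
      by_cases hp : i < p
      · exact Or.inl ⟨p, q, r, hr, rfl, hp⟩
      by_cases hq : j < q
      · exact Or.inr (Or.inl ⟨p, q, r, hr, rfl, hq⟩)
      refine Or.inr (Or.inr ?_)
      refine Set.mem_biUnion (show (p, q) ∈ s from ?_) ?_
      · rw [hs]
        rw [Finset.mem_product]
        constructor <;> simp <;> omega
      · exact ⟨r, hr, rfl, hxa⟩
  rcases neBot_of_union2 hcov with hA | hBU
  · haveI := hA
    exact engineA hsc h₀ hmin hk (inf_le_left.trans hLle)
      (Filter.mem_inf_of_right (Filter.mem_principal_self _))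
  haveI := hBU
  have hmemBU : SB ∪ SU ∈ L₀ ⊓ Filter.principal (SB ∪ SU) :=
    Filter.mem_inf_of_right (Filter.mem_principal_self _)
  rcases neBot_of_union2 hmemBU with hB | hU
  · haveI := hB
    exact engineB (L := (L₀ ⊓ Filter.principal (SB ∪ SU)) ⊓ Filter.principal SB)
      hsc h₀ hmin hk ((inf_le_left.trans inf_le_left).trans hLle)
      (Filter.mem_inf_of_right (Filter.mem_principal_self _))
  haveI := hU
  set L₃ := L₀ ⊓ Filter.principal (SB ∪ SU) ⊓ Filter.principal SU with hL₃
  have hSUmem : (⋃ pq ∈ s, SF pq.1 pq.2) ∈ L₃ :=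
    Filter.mem_inf_of_right (Filter.mem_principal_self _)
  obtain ⟨pq, hpqs, hne4⟩ := exists_neBot_of_union hSUmem
  haveI := hne4
  obtain ⟨p₀, q₀⟩ := pq
  have hp₀ : p₀ ≤ i := by
    rw [hs] at hpqs
    rw [Finset.mem_product] at hpqs
    have := hpqs.1
    simp at this
    omega
  have hq₀ : q₀ ≤ j := by
    rw [hs] at hpqs
    rw [Finset.mem_product] at hpqs
    have := hpqs.2
    simp at this
    omega
  set L₄ := L₃ ⊓ Filter.principal (SF p₀ q₀) with hL₄
  have hL₄le : L₄ ≤ nhds a := ((inf_le_left.trans inf_le_left).trans inf_le_left).trans hLle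
  have hSFmem : SF p₀ q₀ ∈ L₄ := Filter.mem_inf_of_right (Filter.mem_principal_self _)
  -- subsingleton pieces
  have hTsub : ∀ r : ℕ, ({x : BF0 𝓕 | ∃ hr : Set.Ici r ∈ 𝓕, x = sel hcl p₀ q₀ r hr}).Subsingleton := by
    intro r x hx y hy
    obtain ⟨hr, rfl⟩ := hx
    obtain ⟨hr', rfl⟩ := hy
    rfl
  by_cases hbig : ∃ c : ℕ, Set.Ici c ∈ 𝓕 ∧ k + j < c
  · obtain ⟨c₂, hc₂, hkj⟩ := hbig
    set W : Set (BF0 𝓕) :=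
      (⋃ r ∈ Finset.range c₂, {x : BF0 𝓕 | ∃ hr : Set.Ici r ∈ 𝓕, x = sel hcl p₀ q₀ r hr}) ∩ {a}ᶜ
      with hW
    have hWfin : W.Finite :=
      (Set.Finite.biUnion (Finset.range c₂).finite_toSet (fun r _ => (hTsub r).finite)).inter_of_left _
    have haW : a ∉ W := fun h => h.2 rfl
    have hWc : Wᶜ ∈ L₄ := compl_mem_of_finite hL₄le hWfin haW
    have haC : ({a}ᶜ) ∈ L₄ := by
      have : ({a}ᶜ) ∈ L₀ := hne_a
      exact Filter.mem_inf_of_left (Filter.mem_inf_of_left (Filter.mem_inf_of_left this))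
    have hC : {x | ∃ (r : ℕ) (hr : Set.Ici r ∈ 𝓕), x = sel hcl p₀ q₀ r hr ∧ c₂ ≤ r} ∈ L₄ := by
      refine Filter.mem_of_superset (Filter.inter_mem hSFmem (Filter.inter_mem hWc haC)) ?_
      rintro x ⟨⟨r, hr, rfl, hxa⟩, hxW, hxa'⟩
      refine ⟨r, hr, rfl, ?_⟩
      by_contra hrc
      push_neg at hrc
      exact hxW ⟨Set.mem_biUnion (Finset.mem_range.mpr hrc) ⟨hr, rfl⟩, hxa'⟩
    exact engineF hsc h₀ hmin hk hL₄le hp₀ hq₀ hc₂ hkj hC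
  · push_neg at hbig
    set V : Set (BF0 𝓕) :=
      (⋃ r ∈ Finset.range (k+j+1), {x : BF0 𝓕 | ∃ hr : Set.Ici r ∈ 𝓕, x = sel hcl p₀ q₀ r hr}) ∩ {a}ᶜ
      with hV
    have hVfin : V.Finite :=
      (Set.Finite.biUnion (Finset.range (k+j+1)).finite_toSet (fun r _ => (hTsub r).finite)).inter_of_left _
    have haV : a ∉ V := fun h => h.2 rfl
    have hVc : Vᶜ ∈ L₄ := compl_mem_of_finite hL₄le hVfin haV
    have hVin : V ∈ L₄ := by
      refine Filter.mem_of_superset hSFmem ?_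
      rintro x ⟨r, hr, rfl, hxa⟩
      refine ⟨Set.mem_biUnion (Finset.mem_range.mpr ?_) ⟨hr, rfl⟩, hxa⟩
      have := hbig r hr
      omega
    have hempty := Filter.inter_mem hVin hVc
    rw [Set.inter_compl_self] at hempty
    exact Filter.empty_notMem L₄ hempty
end Isolated

section Principles
open Set Filter Topology
variable {X : Type*} [TopologicalSpace X] [T2Space X]

lemma principleF2 {K : Set X} {z : X} (hK : IsCompact K) (hKn : K ∈ nhds z)
    (hiso : ∀ x : X, x ≠ z → IsOpen ({x} : Set X))
    {f : X → X} (hf : Continuous f) (hf0 : f z = z) :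
    {x | x ∈ K ∧ f x ∉ interior K}.Finite := by
  have hcpt : IsCompact (K ∩ (f ⁻¹' interior K)ᶜ) :=
    hK.inter_right (isOpen_interior.preimage hf).isClosed_compl
  have heq : {x | x ∈ K ∧ f x ∉ interior K} = K ∩ (f ⁻¹' interior K)ᶜ := rfl
  rw [heq]
  refine finite_of_compact_of_isolated hcpt ?_
  rintro x ⟨hxK, hxf⟩
  refine hiso x ?_
  rintro rfl
  exact hxf (by rw [Set.mem_preimage, hf0]; exact mem_interior_iff_mem_nhds.mpr hKn)

lemma principleF3 {K : Set X} {z : X} (hK : IsCompact K) (hKn : K ∈ nhds z)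
    (hz : z ∈ K) (hiso : ∀ x : X, x ≠ z → IsOpen ({x} : Set X))
    {f g : X → X} (hg : Continuous g) (hg0 : g z = z)
    {C : Set X} (hrec : ∀ x ∈ C, g (f x) = x) :
    {d | (d ∈ Kᶜ ∧ d ∈ C) ∧ f d ∈ K}.Finite := by
  by_contra hinf
  rw [← Set.not_infinite, not_not] at hinf
  set T := {d | (d ∈ Kᶜ ∧ d ∈ C) ∧ f d ∈ K} with hT
  have u := hinf.natEmbedding
  set vs : ℕ → X := fun n => f ((u n) : X) with hvs
  have hvsinj : Function.Injective vs := by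
    intro n m hnm
    have h1 : g (vs n) = ((u n : T) : X) := hrec _ (u n).2.1.2
    have h2 : g (vs m) = ((u m : T) : X) := hrec _ (u m).2.1.2
    have : ((u n : T) : X) = ((u m : T) : X) := by rw [← h1, ← h2, hnm]
    exact u.injective (Subtype.ext this)
  set ℱ := Filter.map vs Filter.atTop with hFdef
  haveI : ℱ.NeBot := Filter.map_neBot
  have hle : ℱ ≤ Filter.principal K := by
    rw [Filter.le_principal_iff, hFdef, Filter.mem_map]
    filter_upwards with n
    exact (u n).2.2
  obtain ⟨x, hxK, hclx⟩ := hK hle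
  by_cases hxz : x = z
  · subst hxz
    set M := nhds x ⊓ ℱ with hM
    haveI : M.NeBot := hclx
    have h1 : g ⁻¹' (interior K) ∈ M := by
      have ht : Filter.Tendsto g M (nhds x) := by
        have := (hg.tendsto x).mono_left (inf_le_left : M ≤ nhds x)
        rwa [hg0] at this
      exact ht (isOpen_interior.mem_nhds (mem_interior_iff_mem_nhds.mpr hKn))
    have h2 : g ⁻¹' Kᶜ ∈ M := by
      refine Filter.mem_inf_of_right ?_
      rw [Filter.mem_map]
      filter_upwards with n
      show g (vs n) ∈ Kᶜ
      rw [hrec _ (u n).2.1.2]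
      exact (u n).2.1.1
    obtain ⟨y, hy1, hy2⟩ := Filter.nonempty_of_mem (Filter.inter_mem h1 h2)
    exact hy2 (interior_subset hy1)
  · have hxs : ({x} : Set X) ∈ nhds x := (hiso x hxz).mem_nhds rfl
    have h1 : ({x} : Set X) ∩ vs '' (Set.Ici 0) ∈ nhds x ⊓ ℱ :=
      Filter.inter_mem (Filter.mem_inf_of_left hxs)
        (Filter.mem_inf_of_right (Filter.image_mem_map (Filter.mem_atTop 0)))
    haveI : (nhds x ⊓ ℱ).NeBot := hclx
    obtain ⟨y, hy1, m, _, hym⟩ := Filter.nonempty_of_mem h1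
    have h2 : ({x} : Set X) ∩ vs '' (Set.Ici (m+1)) ∈ nhds x ⊓ ℱ :=
      Filter.inter_mem (Filter.mem_inf_of_left hxs)
        (Filter.mem_inf_of_right (Filter.image_mem_map (Filter.mem_atTop (m+1))))
    obtain ⟨y', hy'1, m', hm', hym'⟩ := Filter.nonempty_of_mem h2
    rcases hy1; rcases hy'1
    have : m = m' := hvsinj (by rw [hym, hym'])
    rw [Set.mem_Ici] at hm'
    omega
end Principles

lemma iff_chain {f : ℕ → Prop} (h : ∀ p, f p ↔ f (p+1)) (p p' : ℕ) : f p ↔ f p' := by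
  have h0 : ∀ n, f 0 ↔ f n := by
    intro n
    induction n with
    | zero => exact Iff.rfl
    | succ n ih => exact ih.trans (h n)
  exact (h0 p).symm.trans (h0 p')

section MainCompact
open Set Filter Topology
variable {𝓕 : Set (Set ℕ)} {hcl : OmegaClosed 𝓕}
variable [TopologicalSpace (BF0 𝓕)] [T2Space (BF0 𝓕)]

lemma BF0mul_none_right {a : BF0 𝓕} : BF0mul hcl a none = none := by
  cases a <;> rfl

lemma compact_of_not_isolated
    (hsc : ∀ a : BF0 𝓕, Continuous (fun x => BF0mul hcl a x) ∧
      Continuous (fun x => BF0mul hcl x a))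
    (hne : ∀ F ∈ 𝓕, F.Nonempty) (hind : ∀ F ∈ 𝓕, InductiveSet F)
    (hlc : LocallyCompactSpace (BF0 𝓕))
    (hop : ¬ IsOpen ({(none : BF0 𝓕)} : Set (BF0 𝓕))) : CompactSpace (BF0 𝓕) := by
  classical
  obtain ⟨K, hKc, hKn⟩ := exists_compact_mem_nhds (none : BF0 𝓕)
  have hiso : ∀ x : BF0 𝓕, x ≠ none → IsOpen ({x} : Set (BF0 𝓕)) := by
    intro x hx
    match x with
    | none => exact absurd rfl hx
    | some y => exact isolated_s12 hsc hne hind y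
  -- K minus zero is infinite
  have hKXinf : {x | x ∈ K ∧ x ≠ none}.Infinite := by
    by_contra hfin
    rw [Set.not_infinite] at hfin
    have heq : ({none} : Set (BF0 𝓕)) = interior K \ {x | x ∈ K ∧ x ≠ none} := by
      ext x
      constructor
      · rintro rfl
        exact ⟨mem_interior_iff_mem_nhds.mpr hKn, fun h => h.2 rfl⟩
      · rintro ⟨hx1, hx2⟩
        by_contra hxn
        exact hx2 ⟨interior_subset hx1, hxn⟩
    exact hop (heq ▸ isOpen_interior.sdiff hfin.isClosed)
  -- get a₀
  have hAne : {m : ℕ | Set.Ici m ∈ 𝓕}.Nonempty := by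
    obtain ⟨x₀, hx₀K, hx₀n⟩ := hKXinf.nonempty
    match x₀ with
    | none => exact absurd rfl hx₀n
    | some y₀ =>
      obtain ⟨p, q, r, hr, rfl⟩ := BFW.exists_el hne hind y₀
      exact ⟨r, hr⟩
  set a₀ := sInf {m : ℕ | Set.Ici m ∈ 𝓕} with ha₀
  have h₀ : Set.Ici a₀ ∈ 𝓕 := Nat.sInf_mem hAne
  have hmin : ∀ r : ℕ, Set.Ici r ∈ 𝓕 → a₀ ≤ r := fun r hr => Nat.sInf_le hr
  -- embedding of triples
  set emb : ℕ × ℕ × ℕ → BF0 𝓕 := fun t =>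
    if h : Set.Ici t.2.2 ∈ 𝓕 then sel hcl t.1 t.2.1 t.2.2 h else none with hembdef
  have hembv : ∀ (p q r : ℕ) (hr : Set.Ici r ∈ 𝓕), emb (p,q,r) = sel hcl p q r hr := by
    intro p q r hr
    rw [hembdef]
    exact dif_pos hr
  have hembinj : ∀ t t' : ℕ × ℕ × ℕ, Set.Ici t.2.2 ∈ 𝓕 → Set.Ici t'.2.2 ∈ 𝓕 →
      emb t = emb t' → t = t' := by
    rintro ⟨p, q, r⟩ ⟨p', q', r'⟩ h h' heq
    rw [hembv p q r h, hembv p' q' r' h'] at heq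
    rw [sel_inj] at heq
    obtain ⟨rfl, rfl, rfl⟩ := heq
    rfl
  set OK : ℕ × ℕ × ℕ → Prop := fun t => emb t ∈ K with hOKdef
  -- finite preimages
  have hpre : ∀ s : Set (BF0 𝓕), s.Finite → (none : BF0 𝓕) ∉ s →
      {t : ℕ × ℕ × ℕ | Set.Ici t.2.2 ∈ 𝓕 ∧ emb t ∈ s}.Finite := by
    intro s hs hns
    refine Set.Finite.of_finite_image (f := emb) (hs.subset ?_) ?_
    · rintro x ⟨t, ⟨ht1, ht2⟩, rfl⟩
      exact ht2
    · rintro t ⟨ht1, _⟩ t' ⟨ht1', _⟩ heq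
      exact hembinj t t' ht1 ht1' heq
  -- moves
  set σ₁ : BF0 𝓕 → BF0 𝓕 := fun x => BF0mul hcl (sel hcl 1 0 a₀ h₀) x with hσ₁def
  set σ₁' : BF0 𝓕 → BF0 𝓕 := fun x => BF0mul hcl (sel hcl 0 1 a₀ h₀) x with hσ₁'def
  set σ₂ : BF0 𝓕 → BF0 𝓕 := fun x => BF0mul hcl x (sel hcl 0 1 a₀ h₀) with hσ₂def
  set σ₂' : BF0 𝓕 → BF0 𝓕 := fun x => BF0mul hcl x (sel hcl 1 0 a₀ h₀) with hσ₂'def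
  have hσ₁v : ∀ (p q r : ℕ) (hr : Set.Ici r ∈ 𝓕), σ₁ (sel hcl p q r hr) = sel hcl (p+1) q r hr := by
    intro p q r hr
    have hra := hmin r hr
    rw [hσ₁def]
    show BF0mul hcl (sel hcl 1 0 a₀ h₀) (sel hcl p q r hr) = sel hcl (p+1) q r hr
    unfold sel
    rw [BF0mul_some, Option.some_inj, BFW.BFmul_el_le hcl h₀ hr (by omega), BFW.el_inj]
    omega
  have hσ₁'v : ∀ (p q r : ℕ) (hr : Set.Ici r ∈ 𝓕), σ₁' (sel hcl (p+1) q r hr) = sel hcl p q r hr := by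
    intro p q r hr
    have hra := hmin r hr
    rw [hσ₁'def]
    show BF0mul hcl (sel hcl 0 1 a₀ h₀) (sel hcl (p+1) q r hr) = sel hcl p q r hr
    unfold sel
    rw [BF0mul_some, Option.some_inj, BFW.BFmul_el_le hcl h₀ hr (by omega), BFW.el_inj]
    omega
  have hσ₂v : ∀ (p q r : ℕ) (hr : Set.Ici r ∈ 𝓕), σ₂ (sel hcl p q r hr) = sel hcl p (q+1) r hr := by
    intro p q r hr
    have hra := hmin r hr
    rw [hσ₂def]
    show BF0mul hcl (sel hcl p q r hr) (sel hcl 0 1 a₀ h₀) = sel hcl p (q+1) r hr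
    unfold sel
    rw [BF0mul_some, Option.some_inj]
    by_cases hq : q ≤ 0
    · rw [BFW.BFmul_el_le hcl hr h₀ hq, BFW.el_inj]
      omega
    · rw [BFW.BFmul_el_ge hcl hr h₀ (by omega), BFW.el_inj]
      omega
  have hσ₂'v : ∀ (p q r : ℕ) (hr : Set.Ici r ∈ 𝓕), σ₂' (sel hcl p (q+1) r hr) = sel hcl p q r hr := by
    intro p q r hr
    have hra := hmin r hr
    rw [hσ₂'def]
    show BF0mul hcl (sel hcl p (q+1) r hr) (sel hcl 1 0 a₀ h₀) = sel hcl p q r hr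
    unfold sel
    rw [BF0mul_some, Option.some_inj]
    by_cases hq : q + 1 ≤ 1
    · rw [BFW.BFmul_el_le hcl hr h₀ hq, BFW.el_inj]
      omega
    · rw [BFW.BFmul_el_ge hcl hr h₀ (by omega), BFW.el_inj]
      omega
  have hrec1 : ∀ x ∈ (Set.univ : Set (BF0 𝓕)), σ₁' (σ₁ x) = x := by
    intro x _
    match x with
    | none =>
      rw [hσ₁def, hσ₁'def]
      show BF0mul hcl _ (BF0mul hcl _ none) = none
      rw [BF0mul_none_right, BF0mul_none_right]
    | some y =>
      obtain ⟨p, q, r, hr, rfl⟩ := BFW.exists_el hne hind y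
      show σ₁' (σ₁ (sel hcl p q r hr)) = sel hcl p q r hr
      rw [hσ₁v p q r hr, hσ₁'v p q r hr]
  have hrec2 : ∀ x ∈ (Set.univ : Set (BF0 𝓕)), σ₂' (σ₂ x) = x := by
    intro x _
    match x with
    | none =>
      rw [hσ₂def, hσ₂'def]
      show BF0mul hcl (BF0mul hcl none _) _ = none
      show BF0mul hcl none _ = none
      rfl
    | some y =>
      obtain ⟨p, q, r, hr, rfl⟩ := BFW.exists_el hne hind y
      show σ₂' (σ₂ (sel hcl p q r hr)) = sel hcl p q r hr
      rw [hσ₂v p q r hr, hσ₂'v p q r hr]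
  -- continuity and zero facts for moves
  have hσ₁cont : Continuous σ₁ := by rw [hσ₁def]; exact (hsc _).1
  have hσ₁'cont : Continuous σ₁' := by rw [hσ₁'def]; exact (hsc _).1
  have hσ₂cont : Continuous σ₂ := by rw [hσ₂def]; exact (hsc _).2
  have hσ₂'cont : Continuous σ₂' := by rw [hσ₂'def]; exact (hsc _).2
  have hσ₁0 : σ₁ none = none := by rw [hσ₁def]; exact BF0mul_none_right
  have hσ₁'0 : σ₁' none = none := by rw [hσ₁'def]; exact BF0mul_none_right
  have hσ₂0 : σ₂ none = none := by rw [hσ₂def]; rfl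
  have hσ₂'0 : σ₂' none = none := by rw [hσ₂'def]; rfl
  have hnoneK : (none : BF0 𝓕) ∈ K := mem_of_mem_nhds hKn
  -- row exception set
  have hS1rfin : {x | x ∈ K ∧ σ₁ x ∉ interior K}.Finite :=
    principleF2 hKc hKn hiso hσ₁cont hσ₁0
  have hS2rfin : {d : BF0 𝓕 | (d ∈ Kᶜ ∧ d ∈ Set.univ) ∧ σ₁ d ∈ K}.Finite :=
    principleF3 hKc hKn hnoneK hiso hσ₁'cont hσ₁'0 hrec1
  set ERow : Set (ℕ × ℕ × ℕ) := {t | Set.Ici t.2.2 ∈ 𝓕 ∧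
    emb t ∈ ({x | x ∈ K ∧ σ₁ x ∉ interior K} ∪
      {d : BF0 𝓕 | (d ∈ Kᶜ ∧ d ∈ Set.univ) ∧ σ₁ d ∈ K})} with hERowdef
  have hERowfin : ERow.Finite := by
    refine hpre _ (hS1rfin.union hS2rfin) ?_
    rintro (⟨h1, h2⟩ | ⟨⟨h1, _⟩, _⟩)
    · exact h2 (by rw [hσ₁0]; exact mem_interior_iff_mem_nhds.mpr hKn)
    · exact h1 hnoneK
  have hrowstep : ∀ p q r : ℕ, Set.Ici r ∈ 𝓕 → (p,q,r) ∉ ERow →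
      (emb (p,q,r) ∈ K ↔ emb (p+1,q,r) ∈ K) := by
    intro p q r hr hnE
    rw [hERowdef] at hnE
    have hnE' : emb (p,q,r) ∉ ({x | x ∈ K ∧ σ₁ x ∉ interior K} ∪
        {d : BF0 𝓕 | (d ∈ Kᶜ ∧ d ∈ Set.univ) ∧ σ₁ d ∈ K}) := fun h => hnE ⟨hr, h⟩
    have hstep : σ₁ (emb (p,q,r)) = emb (p+1,q,r) := by
      rw [hembv p q r hr, hembv (p+1) q r hr, hσ₁v]
    constructor
    · intro hOK
      have h1 : ¬ (emb (p,q,r) ∈ K ∧ σ₁ (emb (p,q,r)) ∉ interior K) :=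
        fun h => hnE' (Or.inl h)
      push_neg at h1
      have h2 := interior_subset (h1 hOK)
      rwa [hstep] at h2
    · intro hOK1
      by_contra hnOK
      exact hnE' (Or.inr ⟨⟨hnOK, Set.mem_univ _⟩, by rw [hstep]; exact hOK1⟩)
  -- column exception set
  have hS1cfin : {x | x ∈ K ∧ σ₂ x ∉ interior K}.Finite :=
    principleF2 hKc hKn hiso hσ₂cont hσ₂0
  have hS2cfin : {d : BF0 𝓕 | (d ∈ Kᶜ ∧ d ∈ Set.univ) ∧ σ₂ d ∈ K}.Finite :=
    principleF3 hKc hKn hnoneK hiso hσ₂'cont hσ₂'0 hrec2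
  set ECol : Set (ℕ × ℕ × ℕ) := {t | Set.Ici t.2.2 ∈ 𝓕 ∧
    emb t ∈ ({x | x ∈ K ∧ σ₂ x ∉ interior K} ∪
      {d : BF0 𝓕 | (d ∈ Kᶜ ∧ d ∈ Set.univ) ∧ σ₂ d ∈ K})} with hEColdef
  have hEColfin : ECol.Finite := by
    refine hpre _ (hS1cfin.union hS2cfin) ?_
    rintro (⟨h1, h2⟩ | ⟨⟨h1, _⟩, _⟩)
    · exact h2 (by rw [hσ₂0]; exact mem_interior_iff_mem_nhds.mpr hKn)
    · exact h1 hnoneK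
  have hcolstep : ∀ p q r : ℕ, Set.Ici r ∈ 𝓕 → (p,q,r) ∉ ECol →
      (emb (p,q,r) ∈ K ↔ emb (p,q+1,r) ∈ K) := by
    intro p q r hr hnE
    rw [hEColdef] at hnE
    have hnE' : emb (p,q,r) ∉ ({x | x ∈ K ∧ σ₂ x ∉ interior K} ∪
        {d : BF0 𝓕 | (d ∈ Kᶜ ∧ d ∈ Set.univ) ∧ σ₂ d ∈ K}) := fun h => hnE ⟨hr, h⟩
    have hstep : σ₂ (emb (p,q,r)) = emb (p,q+1,r) := by
      rw [hembv p q r hr, hembv p (q+1) r hr, hσ₂v]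
    constructor
    · intro hOK
      have h1 : ¬ (emb (p,q,r) ∈ K ∧ σ₂ (emb (p,q,r)) ∉ interior K) :=
        fun h => hnE' (Or.inl h)
      push_neg at h1
      have h2 := interior_subset (h1 hOK)
      rwa [hstep] at h2
    · intro hOK1
      by_contra hnOK
      exact hnE' (Or.inr ⟨⟨hnOK, Set.mem_univ _⟩, by rw [hstep]; exact hOK1⟩)
  -- bad indices
  set BadRow : Set (ℕ × ℕ) := (fun t : ℕ × ℕ × ℕ => (t.2.1, t.2.2)) '' ERow with hBadRowdef
  have hBadRowfin : BadRow.Finite := hERowfin.image _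
  set BadCol : Set (ℕ × ℕ) := (fun t : ℕ × ℕ × ℕ => (t.1, t.2.2)) '' ECol with hBadColdef
  have hBadColfin : BadCol.Finite := hEColfin.image _
  have hrowconst : ∀ q r : ℕ, Set.Ici r ∈ 𝓕 → (q,r) ∉ BadRow →
      ∀ p p' : ℕ, (emb (p,q,r) ∈ K ↔ emb (p',q,r) ∈ K) := by
    intro q r hr hcln p p'
    refine iff_chain (f := fun p => emb (p,q,r) ∈ K) ?_ p p'
    intro p0
    refine hrowstep p0 q r hr ?_
    intro hmem
    exact hcln ⟨(p0,q,r), hmem, rfl⟩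
  have hcolconst : ∀ p r : ℕ, Set.Ici r ∈ 𝓕 → (p,r) ∉ BadCol →
      ∀ q q' : ℕ, (emb (p,q,r) ∈ K ↔ emb (p,q',r) ∈ K) := by
    intro p r hr hcln q q'
    refine iff_chain (f := fun q => emb (p,q,r) ∈ K) ?_ q q'
    intro q0
    refine hcolstep p q0 r hr ?_
    intro hmem
    exact hcln ⟨(p,q0,r), hmem, rfl⟩
  -- clean indices abound
  have hcleanrow : ∀ r : ℕ, {j : ℕ | (j, r) ∈ BadRow}.Finite := by
    intro r
    refine Set.Finite.preimage ?_ hBadRowfin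
    intro x _ y _ h
    simpa using h
  have hcleancol : ∀ r : ℕ, {i : ℕ | (i, r) ∈ BadCol}.Finite := by
    intro r
    refine Set.Finite.preimage ?_ hBadColfin
    intro x _ y _ h
    simpa using h
  -- plane type
  set vK : ℕ → Prop := fun r =>
    ∃ i₀ j₀ : ℕ, (i₀,r) ∉ BadCol ∧ (j₀,r) ∉ BadRow ∧ emb (i₀,j₀,r) ∈ K with hvKdef
  have hlink : ∀ p q r : ℕ, Set.Ici r ∈ 𝓕 → ((q,r) ∉ BadRow ∨ (p,r) ∉ BadCol) →
      (emb (p,q,r) ∈ K ↔ vK r) := by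
    intro p q r hr hclean
    obtain ⟨istar, histar⟩ := ((hcleancol r).infinite_compl).nonempty
    obtain ⟨jstar, hjstar⟩ := ((hcleanrow r).infinite_compl).nonempty
    rw [Set.mem_compl_iff, Set.mem_setOf_eq] at histar hjstar
    constructor
    · intro hOK
      rcases hclean with hq | hp
      · exact ⟨istar, q, histar, hq, (hrowconst q r hr hq p istar).mp hOK⟩
      · exact ⟨p, jstar, hp, hjstar, (hcolconst p r hr hp q jstar).mp hOK⟩
    · rintro ⟨i₀, j₀, hc₀, hr₀, hOK⟩
      rcases hclean with hq | hp
      · have h1 : emb (i₀,q,r) ∈ K := (hcolconst i₀ r hr hc₀ j₀ q).mp hOK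
        exact (hrowconst q r hr hq i₀ p).mp h1
      · have h1 : emb (p,j₀,r) ∈ K := (hrowconst j₀ r hr hr₀ i₀ p).mp hOK
        exact (hcolconst p r hr hp j₀ q).mp h1
  -- junk
  set Junk : Set (ℕ × ℕ × ℕ) :=
    {t | (t.2.1, t.2.2) ∈ BadRow ∧ (t.1, t.2.2) ∈ BadCol} with hJunkdef
  have hJunkfin : Junk.Finite := by
    refine Set.Finite.subset (Set.Finite.prod (hBadColfin.image Prod.fst)
      (Set.Finite.prod (hBadRowfin.image Prod.fst) (hBadRowfin.image Prod.snd))) ?_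
    rintro ⟨p, q, r⟩ ⟨h1, h2⟩
    exact ⟨⟨(p,r), h2, rfl⟩, ⟨(q,r), h1, rfl⟩, ⟨(q,r), h1, rfl⟩⟩
  -- D is finite
  have hDfin : (Kᶜ : Set (BF0 𝓕)).Finite := by
    by_cases hvex : ∃ k₀ : ℕ, Set.Ici k₀ ∈ 𝓕 ∧ vK k₀
    · obtain ⟨k₀, hk₀, hv₀⟩ := hvex
      have hraise : ∀ c : ℕ, Set.Ici c ∈ 𝓕 → vK c := by
        intro c hc
        set m := k₀ + c + 1 with hm
        set fr : BF0 𝓕 → BF0 𝓕 := fun x => BF0mul hcl (sel hcl 0 m c hc) x with hfrdef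
        have hfrcont : Continuous fr := by rw [hfrdef]; exact (hsc _).1
        have hfr0 : fr none = none := by rw [hfrdef]; exact BF0mul_none_right
        have hfrv : ∀ j : ℕ, fr (emb (0, j, k₀)) = emb (0, j + m, c) := by
          intro j
          rw [hembv _ _ _ hk₀, hembv _ _ _ hc, hfrdef]
          show BF0mul hcl (sel hcl 0 m c hc) (sel hcl 0 j k₀ hk₀) = sel hcl 0 (j+m) c hc
          unfold sel
          rw [BF0mul_some, Option.some_inj, BFW.BFmul_el_ge hcl hc hk₀ (by omega), BFW.el_inj]
          omega
        have hJinf : {j : ℕ | emb (0, j, k₀) ∈ K}.Infinite := by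
          refine Set.Infinite.mono ?_ ((hcleanrow k₀).infinite_compl)
          intro j hj
          rw [Set.mem_compl_iff, Set.mem_setOf_eq] at hj
          exact (hlink 0 j k₀ hk₀ (Or.inl hj)).mpr hv₀
        have hexc : {j : ℕ | emb (0, j, k₀) ∈ {x | x ∈ K ∧ fr x ∉ interior K}}.Finite := by
          refine Set.Finite.preimage ?_ (principleF2 hKc hKn hiso hfrcont hfr0)
          intro x _ y _ hxy
          have h := hembinj (0,x,k₀) (0,y,k₀) hk₀ hk₀ hxy
          simpa using h
        set J2 : Set ℕ := {j : ℕ | emb (0, j, k₀) ∈ K} \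
            {j : ℕ | emb (0, j, k₀) ∈ {x | x ∈ K ∧ fr x ∉ interior K}} with hJ2def
        have hJ2inf : J2.Infinite := hJinf.diff hexc
        have hJ3 : ∀ j ∈ J2, emb (0, j + m, c) ∈ K := by
          rintro j ⟨hjK, hjE⟩
          have h1 : fr (emb (0,j,k₀)) ∈ interior K := by
            by_contra hno
            exact hjE ⟨hjK, hno⟩
          rw [hfrv j] at h1
          exact interior_subset h1
        have hBiginf : ((fun j => j + m) '' J2).Infinite :=
          hJ2inf.image ((add_left_injective m).injOn)
        obtain ⟨j', hj'big, hj'cln⟩ := (hBiginf.diff (hcleanrow c)).nonempty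
        obtain ⟨j, hjmem, rfl⟩ := hj'big
        rw [Set.mem_setOf_eq] at hj'cln
        exact (hlink 0 (j + m) c hc (Or.inl hj'cln)).mp (hJ3 j hjmem)
      refine Set.Finite.subset (hJunkfin.image emb) ?_
      intro d hd
      match d with
      | none => exact absurd hnoneK hd
      | some y =>
        obtain ⟨p, q, r, hr, rfl⟩ := BFW.exists_el hne hind y
        have hd' : emb (p,q,r) ∉ K := by rw [hembv _ _ _ hr]; exact hd
        by_cases hclean : (q,r) ∉ BadRow ∨ (p,r) ∉ BadCol
        · exact absurd ((hlink p q r hr hclean).mpr (hraise r hr)) hd'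
        · push_neg at hclean
          exact ⟨(p,q,r), ⟨hclean.1, hclean.2⟩, hembv p q r hr⟩
    · push_neg at hvex
      exfalso
      have hsub : {x | x ∈ K ∧ x ≠ none} ⊆ emb '' Junk := by
        rintro x ⟨hxK, hxn⟩
        match x with
        | none => exact absurd rfl hxn
        | some y =>
          obtain ⟨p, q, r, hr, rfl⟩ := BFW.exists_el hne hind y
          have hOK : emb (p,q,r) ∈ K := by rw [hembv _ _ _ hr]; exact hxK
          by_cases hclean : (q,r) ∉ BadRow ∨ (p,r) ∉ BadCol
          · exact absurd ((hlink p q r hr hclean).mp hOK) (hvex r hr)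
          · push_neg at hclean
            exact ⟨(p,q,r), ⟨hclean.1, hclean.2⟩, hembv p q r hr⟩
      exact hKXinf (Set.Finite.subset (hJunkfin.image emb) hsub)
  exact ⟨by rw [← Set.union_compl_self K]; exact hKc.union hDfin.isCompact⟩
end MainCompact

/-- Theorem 3.9: every Hausdorff locally compact shift-continuous topology on
`S = B_ω^𝓕 ∪ {0}` (for an ω-closed family `𝓕` of nonempty inductive subsets of
`ω`) is either compact or discrete. -/
theorem statement12 (𝓕 : Set (Set ℕ)) (hcl : OmegaClosed 𝓕)
    (hne : ∀ F ∈ 𝓕, F.Nonempty) (hind : ∀ F ∈ 𝓕, InductiveSet F)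
    (τ : TopologicalSpace (BF0 𝓕)) (hT2 : @T2Space _ τ)
    (hlc : @LocallyCompactSpace _ τ)
    (hsc : ∀ a : BF0 𝓕, @Continuous _ _ τ τ (fun x => BF0mul hcl a x) ∧
        @Continuous _ _ τ τ (fun x => BF0mul hcl x a)) :
    @CompactSpace _ τ ∨ τ = ⊥ := by
  letI := τ
  haveI := hT2
  haveI := hlc
  by_cases hz : IsOpen ({(none : BF0 𝓕)} : Set (BF0 𝓕))
  · right
    apply eq_bot_of_singletons_open
    intro x
    match x with
    | none => exact hz
    | some v => exact isolated_s12 hsc hne hind v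
  · left
    exact compact_of_not_isolated hsc hne hind hlc hz
end
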